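/- arXiv:1803.01718 — 4 statements merged into one kernel-verified Lean document; each statement's English description precedes it below -/
import Mathlib

section
/- Let E be a Banach space and 1 ≤ p, q < ∞. For every mid (q,p)-summable sequence (x_j)_{j=1}^∞ in E, the quantity ‖(x_j)‖_{q,p} = sup over (x_n*) in the closed unit ball of ℓ_p^w(E*) of (∑_{j=1}^∞ (∑_{n=1}^∞ |x_n*(x_j)|^p)^{q/p})^{1/q} is finite. -/
open NormedSpace MeasureTheory

noncomputable section

/-- A sequence `x` in `E` is weakly `p`-summable: `∑_j |φ(x_j)|^p < ∞` for all `φ ∈ E*`. -/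
def WeaklySummable (𝕜 : Type*) [RCLike 𝕜] {E : Type*} [NormedAddCommGroup E]
    [NormedSpace 𝕜 E] (p : ℝ) (x : ℕ → E) : Prop :=
  ∀ φ : StrongDual 𝕜 E, Summable fun j => ‖φ (x j)‖ ^ p

/-- The weak `p`-norm of a sequence: `sup_{φ ∈ B_{E*}} (∑_j |φ(x_j)|^p)^{1/p}`. -/
def weakNorm (𝕜 : Type*) [RCLike 𝕜] {E : Type*} [NormedAddCommGroup E]
    [NormedSpace 𝕜 E] (p : ℝ) (x : ℕ → E) : ℝ :=
  ⨆ φ : {φ : StrongDual 𝕜 E // ‖φ‖ ≤ 1}, (∑' j, ‖φ.1 (x j)‖ ^ p) ^ (1 / p)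

/-- A sequence `x` in `E` is mid `(q,p)`-summable:
`∑_j (∑_n |x_n^*(x_j)|^p)^{q/p} < ∞` for every weakly `p`-summable sequence `(x_n^*)` in `E*`. -/
def MidSummable (𝕜 : Type*) [RCLike 𝕜] {E : Type*} [NormedAddCommGroup E]
    [NormedSpace 𝕜 E] (q p : ℝ) (x : ℕ → E) : Prop :=
  ∀ xs : ℕ → StrongDual 𝕜 E, WeaklySummable 𝕜 p xs →
    Summable fun j => (∑' n, ‖xs n (x j)‖ ^ p) ^ (q / p)

/-- The mid `(q,p)`-norm:
`sup over (x_n^*) in the closed unit ball of ℓ_p^w(E*)` of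
`(∑_j (∑_n |x_n^*(x_j)|^p)^{q/p})^{1/q}`. -/
def midNorm (𝕜 : Type*) [RCLike 𝕜] {E : Type*} [NormedAddCommGroup E]
    [NormedSpace 𝕜 E] (q p : ℝ) (x : ℕ → E) : ℝ :=
  ⨆ xs : {xs : ℕ → StrongDual 𝕜 E // WeaklySummable 𝕜 p xs ∧ weakNorm 𝕜 p xs ≤ 1},
    (∑' j, (∑' n, ‖xs.1 n (x j)‖ ^ p) ^ (q / p)) ^ (1 / q)

/-- `u : X → Y` is absolutely `p`-summing: there is `C > 0` with
`(∑_{j=1}^k ‖u(x_j)‖^p)^{1/p} ≤ C sup_{φ ∈ B_{X*}} (∑_{j=1}^k |φ(x_j)|^p)^{1/p}`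
for all finite families. -/
def AbsolutelySumming (𝕜 : Type*) [RCLike 𝕜] {X Y : Type*} [NormedAddCommGroup X]
    [NormedSpace 𝕜 X] [NormedAddCommGroup Y] [NormedSpace 𝕜 Y] (p : ℝ)
    (u : X →L[𝕜] Y) : Prop :=
  ∃ C > 0, ∀ (k : ℕ) (z : Fin k → X),
    (∑ j, ‖u (z j)‖ ^ p) ^ (1 / p) ≤
      C * ⨆ φ : {φ : StrongDual 𝕜 X // ‖φ‖ ≤ 1}, (∑ j, ‖φ.1 (z j)‖ ^ p) ^ (1 / p)

/-- The `p`-summing norm `π_p(u)`: the least admissible constant. -/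
def piNorm (𝕜 : Type*) [RCLike 𝕜] {X Y : Type*} [NormedAddCommGroup X]
    [NormedSpace 𝕜 X] [NormedAddCommGroup Y] [NormedSpace 𝕜 Y] (p : ℝ)
    (u : X →L[𝕜] Y) : ℝ :=
  sInf {C : ℝ | 0 < C ∧ ∀ (k : ℕ) (z : Fin k → X),
    (∑ j, ‖u (z j)‖ ^ p) ^ (1 / p) ≤
      C * ⨆ φ : {φ : StrongDual 𝕜 X // ‖φ‖ ≤ 1}, (∑ j, ‖φ.1 (z j)‖ ^ p) ^ (1 / p)}

open scoped ENNReal NNReal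

section Aux

variable {𝕜 X : Type*} [RCLike 𝕜] [NormedAddCommGroup X] [NormedSpace 𝕜 X]

lemma lp_single_add {P : ℝ≥0∞} (i : ℕ) (a b : 𝕜) :
    lp.single (E := fun _ : ℕ => 𝕜) P i (a + b) =
      lp.single P i a + lp.single P i b := by
  apply lp.ext
  funext j
  by_cases h : j = i
  · subst h
    simp [lp.single_apply_self, lp.coeFn_add]
  · simp [lp.single_apply_ne _ _ _ h, lp.coeFn_add]

/-- Uniform boundedness: a weakly `p`-summable sequence has uniformly bounded
partial weak sums over the unit ball of the dual. -/
lemma weaklySummable_unif {p : ℝ} (hp : 1 ≤ p) {xs : ℕ → X}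
    (h : WeaklySummable 𝕜 p xs) :
    ∃ C : ℝ, 0 ≤ C ∧ ∀ φ : StrongDual 𝕜 X, ‖φ‖ ≤ 1 → ∑' n, ‖φ (xs n)‖ ^ p ≤ C := by
  have hp0 : (0 : ℝ) < p := lt_of_lt_of_le one_pos hp
  set P : ℝ≥0∞ := ENNReal.ofReal p with hP
  haveI : Fact (1 ≤ P) := ⟨by rw [hP, ENNReal.one_le_ofReal]; exact hp⟩
  have hPt : P.toReal = p := ENNReal.toReal_ofReal hp0.le
  have hnorm : ∀ (k : ℕ) (φ : StrongDual 𝕜 X),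
      ‖(∑ n ∈ Finset.range k, lp.single (E := fun _ : ℕ => 𝕜) P n (φ (xs n)))‖ ^ p
        = ∑ n ∈ Finset.range k, ‖φ (xs n)‖ ^ p := by
    intro k φ
    have := lp.norm_sum_single (p := P) (E := fun _ : ℕ => 𝕜)
      (by rw [hPt]; exact hp0) (fun n => φ (xs n)) (Finset.range k)
    rwa [hPt] at this
  -- the truncation operators
  have key : ∀ k : ℕ, ∃ g : StrongDual 𝕜 X →L[𝕜] lp (fun _ : ℕ => 𝕜) P,
      ∀ φ : StrongDual 𝕜 X, g φ = ∑ n ∈ Finset.range k, lp.single P n (φ (xs n)) := by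
    intro k
    set M : ℝ := (∑ n ∈ Finset.range k, ‖xs n‖ ^ p) ^ (1 / p) with hM
    refine ⟨LinearMap.mkContinuous
      { toFun := fun φ => ∑ n ∈ Finset.range k, lp.single P n (φ (xs n))
        map_add' := by
          intro φ ψ
          simp [ContinuousLinearMap.add_apply, lp_single_add, Finset.sum_add_distrib]
        map_smul' := by
          intro c φ
          simp [ContinuousLinearMap.smul_apply, ← lp.single_smul, Finset.smul_sum] }
      M ?_, fun φ => rfl⟩
    intro φ
    have h1 := hnorm k φ
    have h2 : ∑ n ∈ Finset.range k, ‖φ (xs n)‖ ^ p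
        ≤ ∑ n ∈ Finset.range k, (‖xs n‖ * ‖φ‖) ^ p := by
      refine Finset.sum_le_sum fun n _ => ?_
      exact Real.rpow_le_rpow (norm_nonneg _)
        ((φ.le_opNorm (xs n)).trans_eq (mul_comm _ _)) hp0.le
    have h3 : ∑ n ∈ Finset.range k, (‖xs n‖ * ‖φ‖) ^ p
        = (∑ n ∈ Finset.range k, ‖xs n‖ ^ p) * ‖φ‖ ^ p := by
      rw [Finset.sum_mul]
      exact Finset.sum_congr rfl fun n _ =>
        Real.mul_rpow (norm_nonneg _) (norm_nonneg _)
    set T := ∑ n ∈ Finset.range k, lp.single (E := fun _ : ℕ => 𝕜) P n (φ (xs n))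
    have hT : ‖T‖ ^ p ≤ (∑ n ∈ Finset.range k, ‖xs n‖ ^ p) * ‖φ‖ ^ p := by
      rw [h1]; exact h2.trans h3.le
    have hS : (0 : ℝ) ≤ ∑ n ∈ Finset.range k, ‖xs n‖ ^ p :=
      Finset.sum_nonneg fun n _ => Real.rpow_nonneg (norm_nonneg _) _
    calc ‖T‖ = (‖T‖ ^ p) ^ p⁻¹ := by
          rw [Real.rpow_rpow_inv (norm_nonneg _) hp0.ne']
      _ ≤ ((∑ n ∈ Finset.range k, ‖xs n‖ ^ p) * ‖φ‖ ^ p) ^ p⁻¹ :=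
          Real.rpow_le_rpow (Real.rpow_nonneg (norm_nonneg _) _) hT
            (by positivity)
      _ = M * ‖φ‖ := by
          rw [Real.mul_rpow hS (Real.rpow_nonneg (norm_nonneg _) _),
            Real.rpow_rpow_inv (norm_nonneg _) hp0.ne', hM, one_div]
  choose g hg using key
  have hpt : ∀ φ : StrongDual 𝕜 X, ∃ C, ∀ k, ‖g k φ‖ ≤ C := by
    intro φ
    refine ⟨(∑' n, ‖φ (xs n)‖ ^ p) ^ (1 / p), fun k => ?_⟩
    have h1 : ‖g k φ‖ ^ p = ∑ n ∈ Finset.range k, ‖φ (xs n)‖ ^ p := by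
      rw [hg]; exact hnorm k φ
    have h2 : ∑ n ∈ Finset.range k, ‖φ (xs n)‖ ^ p ≤ ∑' n, ‖φ (xs n)‖ ^ p :=
      Summable.sum_le_tsum _ (fun n _ => Real.rpow_nonneg (norm_nonneg _) _) (h φ)
    calc ‖g k φ‖ = (‖g k φ‖ ^ p) ^ p⁻¹ := by
          rw [Real.rpow_rpow_inv (norm_nonneg _) hp0.ne']
      _ ≤ (∑' n, ‖φ (xs n)‖ ^ p) ^ p⁻¹ :=
          Real.rpow_le_rpow (Real.rpow_nonneg (norm_nonneg _) _)
            (h1 ▸ h2) (by positivity)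
      _ = (∑' n, ‖φ (xs n)‖ ^ p) ^ (1 / p) := by rw [one_div]
  obtain ⟨C', hC'⟩ := banach_steinhaus hpt
  have hC0 : 0 ≤ C' := le_trans (norm_nonneg _) (hC' 0)
  refine ⟨C' ^ p, Real.rpow_nonneg hC0 _, fun φ hφ => ?_⟩
  refine Real.tsum_le_of_sum_range_le (fun n => Real.rpow_nonneg (norm_nonneg _) _)
    (fun k => ?_)
  have h1 : ∑ n ∈ Finset.range k, ‖φ (xs n)‖ ^ p = ‖g k φ‖ ^ p := by
    rw [hg]; exact (hnorm k φ).symm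
  rw [h1]
  have : ‖g k φ‖ ≤ C' :=
    le_trans ((g k).le_opNorm φ)
      (by calc ‖g k‖ * ‖φ‖ ≤ C' * 1 :=
            mul_le_mul (hC' k) hφ (norm_nonneg _) hC0
          _ = C' := mul_one _)
  exact Real.rpow_le_rpow (norm_nonneg _) this hp0.le

lemma weakNorm_bddAbove {p : ℝ} (hp : 1 ≤ p) {xs : ℕ → X}
    (h : WeaklySummable 𝕜 p xs) :
    BddAbove (Set.range fun φ : {φ : StrongDual 𝕜 X // ‖φ‖ ≤ 1} =>
      (∑' j, ‖φ.1 (xs j)‖ ^ p) ^ (1 / p)) := by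
  obtain ⟨C, hC0, hC⟩ := weaklySummable_unif hp h
  refine ⟨C ^ (1 / p), ?_⟩
  rintro _ ⟨φ, rfl⟩
  exact Real.rpow_le_rpow (tsum_nonneg fun n => Real.rpow_nonneg (norm_nonneg _) _)
    (hC φ.1 φ.2) (by positivity)

/-- For a sequence in the unit ball of `ℓ_p^w`, each functional gives sum at most
`‖Φ‖^p`. -/
lemma weakNorm_le_one_bound {p : ℝ} (hp : 1 ≤ p) {xs : ℕ → X}
    (h : WeaklySummable 𝕜 p xs) (hn : weakNorm 𝕜 p xs ≤ 1)
    (Φ : StrongDual 𝕜 X) : ∑' n, ‖Φ (xs n)‖ ^ p ≤ ‖Φ‖ ^ p := by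
  have hp0 : (0 : ℝ) < p := lt_of_lt_of_le one_pos hp
  have key : ∀ ψ : StrongDual 𝕜 X, ‖ψ‖ ≤ 1 → ∑' n, ‖ψ (xs n)‖ ^ p ≤ 1 := by
    intro ψ hψ
    have h1 : (∑' n, ‖ψ (xs n)‖ ^ p) ^ (1 / p) ≤ weakNorm 𝕜 p xs :=
      le_ciSup (weakNorm_bddAbove hp h) (⟨ψ, hψ⟩ : {φ : StrongDual 𝕜 X // ‖φ‖ ≤ 1})
    have h2 : (∑' n, ‖ψ (xs n)‖ ^ p) ^ (1 / p) ≤ 1 := h1.trans hn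
    have h3 : ((∑' n, ‖ψ (xs n)‖ ^ p) ^ (1 / p)) ^ p ≤ 1 :=
      Real.rpow_le_one (Real.rpow_nonneg
        (tsum_nonneg fun n => Real.rpow_nonneg (norm_nonneg _) _) _) h2 hp0.le
    rwa [one_div, Real.rpow_inv_rpow
      (tsum_nonneg fun n => Real.rpow_nonneg (norm_nonneg _) _) hp0.ne'] at h3
  by_cases hΦ : Φ = 0
  · subst hΦ
    simp [Real.zero_rpow hp0.ne', tsum_nonneg, Real.rpow_nonneg]
  · have hΦ0 : (0 : ℝ) < ‖Φ‖ := norm_pos_iff.mpr hΦ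
    set ψ : StrongDual 𝕜 X := ((‖Φ‖ : 𝕜))⁻¹ • Φ with hψdef
    have hψn : ‖ψ‖ ≤ 1 := by
      rw [hψdef, norm_smul, norm_inv, RCLike.norm_ofReal, abs_of_nonneg hΦ0.le,
        inv_mul_cancel₀ hΦ0.ne']
    have happ : ∀ n, ‖Φ (xs n)‖ = ‖Φ‖ * ‖ψ (xs n)‖ := by
      intro n
      rw [hψdef]
      simp only [ContinuousLinearMap.smul_apply, norm_smul, norm_inv,
        RCLike.norm_ofReal, abs_of_nonneg hΦ0.le]
      field_simp
    calc ∑' n, ‖Φ (xs n)‖ ^ p = ∑' n, ‖Φ‖ ^ p * ‖ψ (xs n)‖ ^ p := by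
          refine tsum_congr fun n => ?_
          rw [happ n, Real.mul_rpow hΦ0.le (norm_nonneg _)]
      _ = ‖Φ‖ ^ p * ∑' n, ‖ψ (xs n)‖ ^ p := tsum_mul_left
      _ ≤ ‖Φ‖ ^ p * 1 := by
          exact mul_le_mul_of_nonneg_left (key ψ hψn) (Real.rpow_nonneg hΦ0.le _)
      _ = ‖Φ‖ ^ p := mul_one _

end Aux

variable {𝕜 E F : Type*}

/-- for a mid `(q,p)`-summable sequence the defining supremum is finite. -/
theorem stmt0 [RCLike 𝕜] [NormedAddCommGroup E] [NormedSpace 𝕜 E] [CompleteSpace E]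
    (p q : ℝ) (hp : 1 ≤ p) (hq : 1 ≤ q) (x : ℕ → E) (hx : MidSummable 𝕜 q p x) :
    BddAbove (Set.range
      fun xs : {xs : ℕ → StrongDual 𝕜 E // WeaklySummable 𝕜 p xs ∧ weakNorm 𝕜 p xs ≤ 1} =>
        (∑' j, (∑' n, ‖xs.1 n (x j)‖ ^ p) ^ (q / p)) ^ (1 / q)) := by
  have hp0 : (0 : ℝ) < p := one_pos.trans_le hp
  have hq0 : (0 : ℝ) < q := one_pos.trans_le hq
  by_contra hbdd
  rw [not_bddAbove_iff] at hbdd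
  have hsel : ∀ k : ℕ,
      ∃ xs : {xs : ℕ → StrongDual 𝕜 E // WeaklySummable 𝕜 p xs ∧ weakNorm 𝕜 p xs ≤ 1},
        (2 : ℝ) ^ k * (k + 1) <
          (∑' j, (∑' n, ‖xs.1 n (x j)‖ ^ p) ^ (q / p)) ^ (1 / q) := by
    intro k
    obtain ⟨y, hy, hlt⟩ := hbdd ((2 : ℝ) ^ k * (k + 1))
    obtain ⟨xs, rfl⟩ := hy
    exact ⟨xs, hlt⟩
  choose a ha using hsel
  set e : ℕ ≃ ℕ × ℕ := (Denumerable.eqv (ℕ × ℕ)).symm with he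
  set c : ℕ → 𝕜 := fun k => (2 : 𝕜)⁻¹ ^ k with hc
  set w : ℕ → ℝ := fun k => (2 : ℝ)⁻¹ ^ k with hw
  have hw0 : ∀ k, (0 : ℝ) < w k := fun k => by positivity
  have hw1 : ∀ k, w k ≤ 1 := fun k => pow_le_one₀ (by norm_num) (by norm_num)
  have hcw : ∀ k, ‖c k‖ = w k := by
    intro k
    rw [hc, hw, norm_pow, norm_inv]
    norm_num
  set F : ℕ × ℕ → StrongDual 𝕜 E := fun kn => c kn.1 • (a kn.1).1 kn.2 with hF
  set ys : ℕ → StrongDual 𝕜 E := fun m => F (e m) with hys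
  -- the key norm identity
  have hFn : ∀ (Φ : StrongDual 𝕜 (StrongDual 𝕜 E)) (kn : ℕ × ℕ),
      ‖Φ (F kn)‖ ^ p = w kn.1 ^ p * ‖Φ ((a kn.1).1 kn.2)‖ ^ p := by
    intro Φ kn
    rw [hF]
    simp only
    rw [Φ.map_smul, norm_smul, hcw, Real.mul_rpow (hw0 _).le (norm_nonneg _)]
  have hws : WeaklySummable 𝕜 p ys := by
    intro Φ
    have hsum : Summable fun kn : ℕ × ℕ => ‖Φ (F kn)‖ ^ p := by
      refine (summable_prod_of_nonneg fun kn => Real.rpow_nonneg (norm_nonneg _) _).2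
        ⟨fun k => ?_, ?_⟩
      · simp only [hFn Φ]
        exact ((a k).2.1 Φ).mul_left _
      · refine Summable.of_nonneg_of_le
          (fun k => tsum_nonneg fun n => Real.rpow_nonneg (norm_nonneg _) _)
          (fun k => ?_)
          ((summable_geometric_of_lt_one (by norm_num) (by norm_num :
            (2 : ℝ)⁻¹ < 1)).mul_left (‖Φ‖ ^ p))
        have h1 : ∑' n, ‖Φ (F (k, n))‖ ^ p = w k ^ p * ∑' n, ‖Φ ((a k).1 n)‖ ^ p := by
          simp only [hFn Φ]
          exact tsum_mul_left
        rw [h1]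
        have h2 : ∑' n, ‖Φ ((a k).1 n)‖ ^ p ≤ ‖Φ‖ ^ p :=
          weakNorm_le_one_bound hp (a k).2.1 (a k).2.2 Φ
        have h3 : w k ^ p ≤ w k := by
          calc w k ^ p ≤ w k ^ (1 : ℝ) :=
                Real.rpow_le_rpow_of_exponent_ge (hw0 k) (hw1 k) hp
            _ = w k := Real.rpow_one _
        calc w k ^ p * ∑' n, ‖Φ ((a k).1 n)‖ ^ p ≤ w k * ‖Φ‖ ^ p := by
              refine mul_le_mul h3 h2
                (tsum_nonneg fun n => Real.rpow_nonneg (norm_nonneg _) _) (hw0 k).le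
          _ = ‖Φ‖ ^ p * (2 : ℝ)⁻¹ ^ k := by rw [mul_comm, hw]
    exact (e.summable_iff (f := fun kn : ℕ × ℕ => ‖Φ (F kn)‖ ^ p)).2 hsum
  have hxs := hx ys hws
  set T : ℝ := ∑' j, (∑' m, ‖ys m (x j)‖ ^ p) ^ (q / p) with hT
  have hTk : ∀ k : ℕ, ((k : ℝ) + 1) ≤ T := by
    intro k
    have hptw : ∀ j, w k ^ q * (∑' n, ‖(a k).1 n (x j)‖ ^ p) ^ (q / p)
        ≤ (∑' m, ‖ys m (x j)‖ ^ p) ^ (q / p) := by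
      intro j
      set Φ : StrongDual 𝕜 (StrongDual 𝕜 E) := inclusionInDoubleDual 𝕜 E (x j) with hΦ
      have hsumys : Summable fun m => ‖ys m (x j)‖ ^ p := hws Φ
      have hsum2 : Summable fun kn : ℕ × ℕ => ‖F kn (x j)‖ ^ p :=
        (e.summable_iff (f := fun kn : ℕ × ℕ => ‖F kn (x j)‖ ^ p)).1 hsumys
      have heq : ∑' m, ‖ys m (x j)‖ ^ p = ∑' kn : ℕ × ℕ, ‖F kn (x j)‖ ^ p :=
        e.tsum_eq (fun kn : ℕ × ℕ => ‖F kn (x j)‖ ^ p)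
      have hFn' : ∀ kn : ℕ × ℕ, ‖F kn (x j)‖ ^ p
          = w kn.1 ^ p * ‖(a kn.1).1 kn.2 (x j)‖ ^ p := fun kn => hFn Φ kn
      have hsl : Summable fun k' => ∑' n, ‖F (k', n) (x j)‖ ^ p :=
        ((summable_prod_of_nonneg fun kn => Real.rpow_nonneg (norm_nonneg _) _).1
          hsum2).2
      have hkle : w k ^ p * ∑' n, ‖(a k).1 n (x j)‖ ^ p ≤ ∑' m, ‖ys m (x j)‖ ^ p := by
        rw [heq, Summable.tsum_prod' hsum2 fun k' =>
          ((summable_prod_of_nonneg fun kn => Real.rpow_nonneg (norm_nonneg _) _).1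
            hsum2).1 k']
        have h1 : w k ^ p * ∑' n, ‖(a k).1 n (x j)‖ ^ p
            = ∑' n, ‖F (k, n) (x j)‖ ^ p := by
          simp only [hFn']
          exact tsum_mul_left.symm
        rw [h1]
        exact Summable.le_tsum hsl k fun k' _ =>
          tsum_nonneg fun n => Real.rpow_nonneg (norm_nonneg _) _
      have hmono := Real.rpow_le_rpow
        (mul_nonneg (Real.rpow_nonneg (hw0 k).le _)
          (tsum_nonneg fun n => Real.rpow_nonneg (norm_nonneg _) _))
        hkle (div_nonneg hq0.le hp0.le)
      have hwq : ((w k ^ p) : ℝ) ^ (q / p) = w k ^ q := by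
        rw [← Real.rpow_mul (hw0 k).le]
        congr 1
        field_simp
      rwa [Real.mul_rpow (Real.rpow_nonneg (hw0 k).le _)
          (tsum_nonneg fun n => Real.rpow_nonneg (norm_nonneg _) _), hwq] at hmono
    have hsumL : Summable fun j =>
        w k ^ q * (∑' n, ‖(a k).1 n (x j)‖ ^ p) ^ (q / p) :=
      (hx (a k).1 (a k).2.1).mul_left _
    have hle := Summable.tsum_le_tsum hptw hsumL hxs
    rw [tsum_mul_left] at hle
    set W : ℝ := ∑' j, (∑' n, ‖(a k).1 n (x j)‖ ^ p) ^ (q / p) with hWdef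
    have hW0 : 0 ≤ W :=
      tsum_nonneg fun j => Real.rpow_nonneg
        (tsum_nonneg fun n => Real.rpow_nonneg (norm_nonneg _) _) _
    have hV : (2 : ℝ) ^ k * (k + 1) < W ^ (1 / q) := ha k
    have hwk2 : w k * (2 : ℝ) ^ k = 1 := by
      simp only [hw, inv_pow]
      exact inv_mul_cancel₀ (by positivity)
    have ht1 : ((k : ℝ) + 1) < w k * W ^ (1 / q) := by
      have := mul_lt_mul_of_pos_left hV (hw0 k)
      calc ((k : ℝ) + 1) = w k * ((2 : ℝ) ^ k * (k + 1)) := by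
            rw [← mul_assoc, hwk2, one_mul]
        _ < w k * W ^ (1 / q) := this
    have hk1 : (1 : ℝ) ≤ (k : ℝ) + 1 := by
      have := Nat.cast_nonneg (α := ℝ) k
      linarith
    have ht2 : w k * W ^ (1 / q) ≤ (w k * W ^ (1 / q)) ^ q := by
      calc w k * W ^ (1 / q) = (w k * W ^ (1 / q)) ^ (1 : ℝ) := (Real.rpow_one _).symm
        _ ≤ (w k * W ^ (1 / q)) ^ q :=
            Real.rpow_le_rpow_of_exponent_le (hk1.trans ht1.le) hq
    have ht3 : (w k * W ^ (1 / q)) ^ q = w k ^ q * W := by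
      rw [Real.mul_rpow (hw0 k).le (Real.rpow_nonneg hW0 _), one_div,
        Real.rpow_inv_rpow hW0 hq0.ne']
    calc ((k : ℝ) + 1) ≤ (w k * W ^ (1 / q)) ^ q := ht1.le.trans ht2
      _ = w k ^ q * W := ht3
      _ ≤ T := hle
  obtain ⟨k, hk⟩ := exists_nat_gt T
  have := hTk k
  linarith
end
end

section
/- Let E be a Banach space and 1 ≤ p < ∞, 1 ≤ q ≤ r < ∞. Every mid (q,p)-summable sequence in E is mid (r,p)-summable, and ‖(x_j)‖_{r,p} ≤ ‖(x_j)‖_{q,p} for every mid (q,p)-summable sequence (x_j)_{j=1}^∞ in E. -/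
open NormedSpace MeasureTheory

noncomputable section

variable {𝕜 E F : Type*}


set_option maxHeartbeats 1000000

open Filter Topology ENNReal

private lemma lq_le_lr {b : ℕ → ℝ} (hb : ∀ j, 0 ≤ b j) {q r : ℝ} (hq : 0 < q) (hqr : q ≤ r)
    (hs : Summable fun j => b j ^ q) :
    Summable (fun j => b j ^ r) ∧ (∑' j, b j ^ r) ^ (1 / r) ≤ (∑' j, b j ^ q) ^ (1 / q) := by
  have hr : 0 < r := lt_of_lt_of_le hq hqr
  set S := ∑' j, b j ^ q with hS
  have hS0 : 0 ≤ S := tsum_nonneg fun j => Real.rpow_nonneg (hb j) q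
  set T := S ^ (1 / q) with hT
  have hT0 : 0 ≤ T := Real.rpow_nonneg hS0 _
  have hTq : T ^ q = S := by
    rw [hT, ← Real.rpow_mul hS0]
    rw [show 1 / q * q = 1 by field_simp, Real.rpow_one]
  have hble : ∀ j, b j ^ q ≤ S := fun j =>
    hs.le_tsum j fun m _ => Real.rpow_nonneg (hb m) q
  have hbj : ∀ j, b j ≤ T := by
    intro j
    have h1 := Real.rpow_le_rpow (Real.rpow_nonneg (hb j) q) (hble j) (le_of_lt (one_div_pos.mpr hq))
    rwa [← Real.rpow_mul (hb j), show q * (1 / q) = 1 by field_simp, Real.rpow_one] at h1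
  have hkey : ∀ j, b j ^ r ≤ b j ^ q * T ^ (r - q) := by
    intro j
    have h1 : b j ^ r = b j ^ q * b j ^ (r - q) := by
      have h2 : q + (r - q) = r := by ring
      rw [← h2, Real.rpow_add' (hb j) (by rw [h2]; exact ne_of_gt hr), h2]
    rw [h1]
    exact mul_le_mul_of_nonneg_left
      (Real.rpow_le_rpow (hb j) (hbj j) (sub_nonneg.mpr hqr))
      (Real.rpow_nonneg (hb j) q)
  have hsr : Summable fun j => b j ^ r :=
    Summable.of_nonneg_of_le (fun j => Real.rpow_nonneg (hb j) r) hkey (hs.mul_right _)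
  refine ⟨hsr, ?_⟩
  have h2 : (∑' j, b j ^ r) ≤ S * T ^ (r - q) := by
    calc (∑' j, b j ^ r) ≤ ∑' j, b j ^ q * T ^ (r - q) :=
          Summable.tsum_le_tsum hkey hsr (hs.mul_right _)
      _ = S * T ^ (r - q) := by rw [tsum_mul_right]
  have h3 : S * T ^ (r - q) = T ^ r := by
    rw [← hTq, ← Real.rpow_add' hT0 (by rw [show q + (r - q) = r by ring]; exact ne_of_gt hr)]
    rw [show q + (r - q) = r by ring]
  have h4 : (∑' j, b j ^ r) ^ (1 / r) ≤ (T ^ r) ^ (1 / r) := by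
    rw [← h3]
    exact Real.rpow_le_rpow (tsum_nonneg fun j => Real.rpow_nonneg (hb j) r) h2
      (le_of_lt (one_div_pos.mpr hr))
  rwa [← Real.rpow_mul hT0, show r * (1 / r) = 1 by field_simp, Real.rpow_one] at h4

private lemma weak_bound {𝕂 X : Type*} [RCLike 𝕂] [NormedAddCommGroup X] [NormedSpace 𝕂 X]
    {p : ℝ} (hp : 1 ≤ p) {xs : ℕ → X} (h : WeaklySummable 𝕂 p xs) :
    ∃ C : ℝ, 0 ≤ C ∧ ∀ φ : StrongDual 𝕂 X, (∑' n, ‖φ (xs n)‖ ^ p) ≤ C ^ p * ‖φ‖ ^ p := by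
  have hp0 : (0:ℝ) < p := lt_of_lt_of_le one_pos hp
  set pe : ℝ≥0∞ := ENNReal.ofReal p with hpe
  haveI : Fact (1 ≤ pe) := ⟨by rw [hpe]; exact ENNReal.one_le_ofReal.mpr hp⟩
  have hpt : pe.toReal = p := ENNReal.toReal_ofReal hp0.le
  have hpt0 : 0 < pe.toReal := by rw [hpt]; exact hp0
  have hmem : ∀ φ : StrongDual 𝕂 X, Memℓp (fun n => φ (xs n)) pe :=
    fun φ => memℓp_gen (by rw [hpt]; exact h φ)
  let T : StrongDual 𝕂 X →ₗ[𝕂] lp (fun _ : ℕ => 𝕂) pe :=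
    { toFun := fun φ => ⟨fun n => φ (xs n), hmem φ⟩
      map_add' := fun φ ψ => rfl
      map_smul' := fun c φ => rfl }
  have hTapp : ∀ (φ : StrongDual 𝕂 X) (n : ℕ), (T φ : ℕ → 𝕂) n = φ (xs n) := fun φ n => rfl
  have hcont : Continuous T := by
    apply LinearMap.continuous_of_seq_closed_graph
    intro u φ y hu hTu
    have hkey : ∀ n, (y : ℕ → 𝕂) n = φ (xs n) := by
      intro n
      have h1 : Tendsto (fun k => (u k) (xs n)) atTop (𝓝 (φ (xs n))) := by
        have : Tendsto (fun k => u k) atTop (𝓝 φ) := hu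
        exact Tendsto.comp (ContinuousLinearMap.apply 𝕂 𝕂 (xs n) :
          StrongDual 𝕂 X →L[𝕂] 𝕂).continuous.continuousAt this
      have h2 : Tendsto (fun k => (u k) (xs n)) atTop (𝓝 ((y : ℕ → 𝕂) n)) := by
        have h3 : Tendsto (fun k => ‖T (u k) - y‖) atTop (𝓝 0) := by
          have := tendsto_iff_norm_sub_tendsto_zero.mp hTu
          simpa [Function.comp] using this
        have hpe0 : pe ≠ 0 :=
          (lt_of_lt_of_le zero_lt_one (Fact.out : 1 ≤ pe)).ne'
        have h4 : ∀ k, ‖(u k) (xs n) - (y : ℕ → 𝕂) n‖ ≤ ‖T (u k) - y‖ := by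
          intro k
          have h5 := lp.norm_apply_le_norm hpe0 (T (u k) - y) n
          rw [lp.coeFn_sub, Pi.sub_apply, hTapp] at h5
          exact h5
        rw [tendsto_iff_norm_sub_tendsto_zero]
        exact squeeze_zero (fun k => norm_nonneg _) h4 h3
      exact (tendsto_nhds_unique h2 h1)
    apply lp.ext
    funext n
    rw [hTapp]
    exact hkey n
  let Tc : StrongDual 𝕂 X →L[𝕂] lp (fun _ : ℕ => 𝕂) pe := ⟨T, hcont⟩
  refine ⟨‖Tc‖, Tc.opNorm_nonneg, ?_⟩
  intro φ
  have h1 : (∑' n, ‖φ (xs n)‖ ^ p) = ‖Tc φ‖ ^ p := by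
    have := lp.norm_rpow_eq_tsum hpt0 (Tc φ)
    rw [hpt] at this
    rw [this]
    exact tsum_congr fun n => rfl
  rw [h1, ← Real.mul_rpow Tc.opNorm_nonneg (norm_nonneg φ)]
  exact Real.rpow_le_rpow (norm_nonneg _) (Tc.le_opNorm φ) hp0.le

private lemma weak_norm_le {𝕂 X : Type*} [RCLike 𝕂] [NormedAddCommGroup X] [NormedSpace 𝕂 X]
    {p : ℝ} (hp : 1 ≤ p) {xs : ℕ → X} (h : WeaklySummable 𝕂 p xs)
    (h1 : weakNorm 𝕂 p xs ≤ 1) :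
    ∀ φ : StrongDual 𝕂 X, (∑' n, ‖φ (xs n)‖ ^ p) ≤ ‖φ‖ ^ p := by
  have hp0 : (0:ℝ) < p := lt_of_lt_of_le one_pos hp
  obtain ⟨C, hC0, hC⟩ := weak_bound hp h
  have htnn : ∀ φ : StrongDual 𝕂 X, (0:ℝ) ≤ ∑' n, ‖φ (xs n)‖ ^ p :=
    fun φ => tsum_nonneg fun n => Real.rpow_nonneg (norm_nonneg _) _
  have hBdd : BddAbove (Set.range fun φ : {φ : StrongDual 𝕂 X // ‖φ‖ ≤ 1} =>
      (∑' n, ‖φ.1 (xs n)‖ ^ p) ^ (1 / p)) := by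
    refine ⟨C, ?_⟩
    rintro _ ⟨φ, rfl⟩
    have h2 : (∑' n, ‖φ.1 (xs n)‖ ^ p) ≤ C ^ p := by
      refine (hC φ.1).trans ?_
      have h3 : ‖φ.1‖ ^ p ≤ 1 := Real.rpow_le_one (norm_nonneg _) φ.2 hp0.le
      have h4 : (0:ℝ) ≤ C ^ p := Real.rpow_nonneg hC0 _
      nlinarith
    calc (∑' n, ‖φ.1 (xs n)‖ ^ p) ^ (1 / p) ≤ (C ^ p) ^ (1 / p) :=
          Real.rpow_le_rpow (htnn φ.1) h2 (by positivity)
      _ = C := by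
          rw [← Real.rpow_mul hC0, show p * (1 / p) = 1 by field_simp, Real.rpow_one]
  have hball : ∀ φ : StrongDual 𝕂 X, ‖φ‖ ≤ 1 → (∑' n, ‖φ (xs n)‖ ^ p) ≤ 1 := by
    intro φ hφ
    have h2 : (∑' n, ‖φ (xs n)‖ ^ p) ^ (1 / p) ≤ 1 :=
      (le_ciSup hBdd (⟨φ, hφ⟩ : {φ : StrongDual 𝕂 X // ‖φ‖ ≤ 1})).trans h1
    have h3 := Real.rpow_le_rpow (Real.rpow_nonneg (htnn φ) _) h2 hp0.le
    rwa [← Real.rpow_mul (htnn φ), show 1 / p * p = 1 by field_simp, Real.rpow_one,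
      Real.one_rpow] at h3
  intro φ
  by_cases hzero : φ = 0
  · subst hzero
    simp [Real.zero_rpow (ne_of_gt hp0), tsum_zero]
  · have ha : (0:ℝ) < ‖φ‖ := norm_pos_iff.mpr hzero
    set ψ : StrongDual 𝕂 X := ((‖φ‖⁻¹ : ℝ) : 𝕂) • φ with hψ
    have hψn : ‖ψ‖ ≤ 1 := by
      rw [hψ, norm_smul, RCLike.norm_ofReal, abs_of_pos (inv_pos.mpr ha),
        inv_mul_cancel₀ (ne_of_gt ha)]
    have hψs := hball ψ hψn
    have hrw : ∀ n, ‖φ (xs n)‖ ^ p = ‖φ‖ ^ p * ‖ψ (xs n)‖ ^ p := by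
      intro n
      have h5 : ψ (xs n) = ((‖φ‖⁻¹ : ℝ) : 𝕂) * φ (xs n) := rfl
      rw [h5, norm_mul, RCLike.norm_ofReal, abs_of_pos (inv_pos.mpr ha),
        Real.mul_rpow (by positivity) (norm_nonneg _), ← mul_assoc,
        ← Real.mul_rpow (norm_nonneg _) (by positivity),
        mul_inv_cancel₀ (ne_of_gt ha), Real.one_rpow, one_mul]
    calc (∑' n, ‖φ (xs n)‖ ^ p) = ∑' n, ‖φ‖ ^ p * ‖ψ (xs n)‖ ^ p := tsum_congr hrw
      _ = ‖φ‖ ^ p * ∑' n, ‖ψ (xs n)‖ ^ p := tsum_mul_left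
      _ ≤ ‖φ‖ ^ p * 1 := by
          exact mul_le_mul_of_nonneg_left hψs (Real.rpow_nonneg (norm_nonneg _) _)
      _ = ‖φ‖ ^ p := mul_one _

private lemma mid_bddAbove {𝕂 E : Type*} [RCLike 𝕂] [NormedAddCommGroup E] [NormedSpace 𝕂 E]
    {p q : ℝ} (hp : 1 ≤ p) (hq : 1 ≤ q) (x : ℕ → E) (hx : MidSummable 𝕂 q p x) :
    BddAbove (Set.range fun xs : {xs : ℕ → StrongDual 𝕂 E // WeaklySummable 𝕂 p xs ∧ weakNorm 𝕂 p xs ≤ 1} =>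
      (∑' j, (∑' n, ‖xs.1 n (x j)‖ ^ p) ^ (q / p)) ^ (1 / q)) := by
  have hp0 : (0:ℝ) < p := lt_of_lt_of_le one_pos hp
  have hq0 : (0:ℝ) < q := lt_of_lt_of_le one_pos hq
  by_contra hB
  rw [not_bddAbove_iff] at hB
  have hch : ∀ k : ℕ, ∃ i : {xs : ℕ → StrongDual 𝕂 E // WeaklySummable 𝕂 p xs ∧ weakNorm 𝕂 p xs ≤ 1},
      (2:ℝ) ^ (k+1) * ((k:ℝ)+1) < (∑' j, (∑' n, ‖i.1 n (x j)‖ ^ p) ^ (q / p)) ^ (1 / q) := by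
    intro k
    obtain ⟨_, ⟨i, rfl⟩, hlt⟩ := hB ((2:ℝ) ^ (k+1) * ((k:ℝ)+1))
    exact ⟨i, hlt⟩
  choose i hi using hch
  set c : ℕ → ℝ := fun k => (2:ℝ)⁻¹ ^ (k+1) with hc
  have hc0 : ∀ k, 0 < c k := fun k => pow_pos (by norm_num) _
  have hc1 : ∀ k, c k ≤ 1 := fun k => pow_le_one₀ (by norm_num) (by norm_num)
  have hWk : ∀ k (Φ : StrongDual 𝕂 (StrongDual 𝕂 E)), (∑' n, ‖Φ ((i k).1 n)‖ ^ p) ≤ ‖Φ‖ ^ p :=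
    fun k => weak_norm_le hp (i k).2.1 (i k).2.2
  set e : ℕ ≃ ℕ × ℕ := (Denumerable.eqv (ℕ × ℕ)).symm with he
  set ys : ℕ → StrongDual 𝕂 E := fun m => ((c (e m).1 : ℝ) : 𝕂) • (i (e m).1).1 (e m).2 with hys
  have pkg : ∀ Φ : StrongDual 𝕂 (StrongDual 𝕂 E),
      Summable (fun m => ‖Φ (ys m)‖ ^ p) ∧
      Summable (fun k' => c k' ^ p * ∑' n, ‖Φ ((i k').1 n)‖ ^ p) ∧
      (∑' m, ‖Φ (ys m)‖ ^ p) = ∑' k', c k' ^ p * ∑' n, ‖Φ ((i k').1 n)‖ ^ p := by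
    intro Φ
    set F : ℕ × ℕ → ℝ := fun kn => c kn.1 ^ p * ‖Φ ((i kn.1).1 kn.2)‖ ^ p with hF
    have hFnn : ∀ kn, 0 ≤ F kn := fun kn =>
      mul_nonneg (Real.rpow_nonneg (hc0 kn.1).le _) (Real.rpow_nonneg (norm_nonneg _) _)
    have hFys : ∀ m, ‖Φ (ys m)‖ ^ p = F (e m) := by
      intro m
      have h1 : Φ (ys m) = ((c (e m).1 : ℝ) : 𝕂) * Φ ((i (e m).1).1 (e m).2) := by
        rw [hys]
        simp [_root_.map_smul, smul_eq_mul, RCLike.real_smul_eq_coe_mul]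
      rw [hF, h1, norm_mul, RCLike.norm_ofReal, abs_of_pos (hc0 _),
        Real.mul_rpow (hc0 _).le (norm_nonneg _)]
    have hfib : ∀ k', Summable fun n => F (k', n) := by
      intro k'
      simp only [hF]
      exact ((i k').2.1 Φ).mul_left (c k' ^ p)
    have hfibsum : ∀ k', (∑' n, F (k', n)) = c k' ^ p * ∑' n, ‖Φ ((i k').1 n)‖ ^ p := by
      intro k'
      simp only [hF]
      exact tsum_mul_left
    have htsnn : ∀ k', (0:ℝ) ≤ ∑' n, ‖Φ ((i k').1 n)‖ ^ p :=
      fun k' => tsum_nonneg fun n => Real.rpow_nonneg (norm_nonneg _) _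
    have hfsb : ∀ k', c k' ^ p * (∑' n, ‖Φ ((i k').1 n)‖ ^ p) ≤ c k' * ‖Φ‖ ^ p := by
      intro k'
      have h2 : c k' ^ p ≤ c k' := by
        have h3 := Real.rpow_le_rpow_of_exponent_ge (hc0 k') (hc1 k') hp
        rwa [Real.rpow_one] at h3
      exact mul_le_mul h2 (hWk k' Φ) (htsnn k') (hc0 k').le
    have hgeo : Summable fun k' : ℕ => c k' * ‖Φ‖ ^ p := by
      have h4 : Summable fun k' : ℕ => ((2:ℝ)⁻¹) ^ k' :=
        summable_geometric_of_lt_one (by norm_num) (by norm_num)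
      have h5 : Summable c := by
        rw [hc]
        simpa [pow_succ] using h4.mul_right (2:ℝ)⁻¹
      exact h5.mul_right _
    have hsum2 : Summable fun k' => c k' ^ p * ∑' n, ‖Φ ((i k').1 n)‖ ^ p :=
      Summable.of_nonneg_of_le
        (fun k' => mul_nonneg (Real.rpow_nonneg (hc0 k').le _) (htsnn k')) hfsb hgeo
    have hFs : Summable F := by
      refine (summable_prod_of_nonneg ?_).mpr ⟨hfib, ?_⟩
      · exact fun kn => hFnn kn
      · exact hsum2.congr fun k' => (hfibsum k').symm
    have hsm : Summable (fun m => ‖Φ (ys m)‖ ^ p) := by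
      have h6 : Summable (F ∘ e) := e.summable_iff.mpr hFs
      exact h6.congr fun m => (hFys m).symm
    refine ⟨hsm, hsum2, ?_⟩
    calc (∑' m, ‖Φ (ys m)‖ ^ p) = ∑' m, F (e m) := tsum_congr hFys
      _ = ∑' kn, F kn := e.tsum_eq F
      _ = ∑' k', ∑' n, F (k', n) := Summable.tsum_prod' hFs hfib
      _ = ∑' k', c k' ^ p * ∑' n, ‖Φ ((i k').1 n)‖ ^ p := tsum_congr hfibsum
  have hWys : WeaklySummable 𝕂 p ys := fun Φ => (pkg Φ).1
  have hS : Summable fun j => (∑' n, ‖ys n (x j)‖ ^ p) ^ (q / p) := hx ys hWys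
  have hSb : ∀ k : ℕ, ((k:ℝ) + 1) ≤ ∑' j, (∑' n, ‖ys n (x j)‖ ^ p) ^ (q / p) := by
    intro k
    have ha0 : ∀ j, (0:ℝ) ≤ ∑' n, ‖(i k).1 n (x j)‖ ^ p :=
      fun j => tsum_nonneg fun n => Real.rpow_nonneg (norm_nonneg _) _
    have hAge : ∀ j, c k ^ p * (∑' n, ‖(i k).1 n (x j)‖ ^ p) ≤ ∑' n, ‖ys n (x j)‖ ^ p := by
      intro j
      have he1 : ∀ ψ : StrongDual 𝕂 E, ψ (x j) = (inclusionInDoubleDual 𝕂 E (x j)) ψ :=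
        fun ψ => (dual_def 𝕂 E (x j) ψ).symm
      have h1 : (∑' n, ‖ys n (x j)‖ ^ p)
          = ∑' k', c k' ^ p * ∑' n, ‖(inclusionInDoubleDual 𝕂 E (x j)) ((i k').1 n)‖ ^ p := by
        rw [← (pkg (inclusionInDoubleDual 𝕂 E (x j))).2.2]
        exact tsum_congr fun m => by rw [he1]
      have h2 : (∑' n, ‖(i k).1 n (x j)‖ ^ p)
          = ∑' n, ‖(inclusionInDoubleDual 𝕂 E (x j)) ((i k).1 n)‖ ^ p :=
        tsum_congr fun n => by rw [he1]
      rw [h1, h2]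
      exact Summable.le_tsum (pkg (inclusionInDoubleDual 𝕂 E (x j))).2.1 k fun k' _ =>
        mul_nonneg (Real.rpow_nonneg (hc0 k').le _)
          (tsum_nonneg fun n => Real.rpow_nonneg (norm_nonneg _) _)
    have hqp0 : (0:ℝ) ≤ q / p := div_nonneg hq0.le hp0.le
    have hsplit : ∀ j, (c k ^ p * (∑' n, ‖(i k).1 n (x j)‖ ^ p)) ^ (q / p)
        = c k ^ q * (∑' n, ‖(i k).1 n (x j)‖ ^ p) ^ (q / p) := by
      intro j
      rw [Real.mul_rpow (Real.rpow_nonneg (hc0 k).le _) (ha0 j), ← Real.rpow_mul (hc0 k).le,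
        show p * (q / p) = q by field_simp]
    have hsmall : Summable fun j => (c k ^ p * (∑' n, ‖(i k).1 n (x j)‖ ^ p)) ^ (q / p) :=
      ((hx (i k).1 (i k).2.1).mul_left (c k ^ q)).congr fun j => (hsplit j).symm
    have hchain : c k ^ q * (∑' j, (∑' n, ‖(i k).1 n (x j)‖ ^ p) ^ (q / p))
        ≤ ∑' j, (∑' n, ‖ys n (x j)‖ ^ p) ^ (q / p) := by
      have h3 : ∀ j, (c k ^ p * (∑' n, ‖(i k).1 n (x j)‖ ^ p)) ^ (q / p)
          ≤ ((∑' n, ‖ys n (x j)‖ ^ p)) ^ (q / p) := fun j =>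
        Real.rpow_le_rpow (mul_nonneg (Real.rpow_nonneg (hc0 k).le _) (ha0 j)) (hAge j) hqp0
      have h4 := Summable.tsum_le_tsum h3 hsmall hS
      calc c k ^ q * (∑' j, (∑' n, ‖(i k).1 n (x j)‖ ^ p) ^ (q / p))
          = ∑' j, c k ^ q * (∑' n, ‖(i k).1 n (x j)‖ ^ p) ^ (q / p) := tsum_mul_left.symm
        _ = ∑' j, (c k ^ p * (∑' n, ‖(i k).1 n (x j)‖ ^ p)) ^ (q / p) :=
            tsum_congr fun j => (hsplit j).symm
        _ ≤ _ := h4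
    have hB0 : (0:ℝ) ≤ (2:ℝ) ^ (k+1) * ((k:ℝ)+1) := by positivity
    have hTk : ((2:ℝ) ^ (k+1) * ((k:ℝ)+1)) ^ q
        < ∑' j, (∑' n, ‖(i k).1 n (x j)‖ ^ p) ^ (q / p) := by
      have h5 := Real.rpow_lt_rpow hB0 (hi k) hq0
      rwa [← Real.rpow_mul (tsum_nonneg fun j => Real.rpow_nonneg (ha0 j) _),
        show 1 / q * q = 1 by field_simp, Real.rpow_one] at h5
    have hfin : c k ^ q * ((2:ℝ) ^ (k+1) * ((k:ℝ)+1)) ^ q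
        ≤ ∑' j, (∑' n, ‖ys n (x j)‖ ^ p) ^ (q / p) :=
      le_trans (mul_le_mul_of_nonneg_left hTk.le (Real.rpow_nonneg (hc0 k).le _)) hchain
    have hone : c k * ((2:ℝ) ^ (k+1) * ((k:ℝ)+1)) = (k:ℝ)+1 := by
      rw [hc, ← mul_assoc, ← mul_pow]
      norm_num
    have hsimp : c k ^ q * ((2:ℝ) ^ (k+1) * ((k:ℝ)+1)) ^ q = ((k:ℝ)+1) ^ q := by
      rw [← Real.mul_rpow (hc0 k).le hB0, hone]
    have hge : ((k:ℝ)+1) ≤ ((k:ℝ)+1) ^ q := by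
      have h6 := Real.rpow_le_rpow_of_exponent_le
        (by exact le_add_of_nonneg_left (Nat.cast_nonneg k) : (1:ℝ) ≤ (k:ℝ)+1) hq
      rwa [Real.rpow_one] at h6
    calc ((k:ℝ)+1) ≤ ((k:ℝ)+1) ^ q := hge
      _ = c k ^ q * ((2:ℝ) ^ (k+1) * ((k:ℝ)+1)) ^ q := hsimp.symm
      _ ≤ _ := hfin
  obtain ⟨k, hk⟩ := exists_nat_gt (∑' j, (∑' n, ‖ys n (x j)‖ ^ p) ^ (q / p))
  have h7 := hSb k
  have h8 : ((k:ℝ)) < ((k:ℝ)+1) := by linarith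
  linarith

/-- if `q ≤ r` then every mid `(q,p)`-summable sequence is mid `(r,p)`-summable
with `‖(x_j)‖_{r,p} ≤ ‖(x_j)‖_{q,p}`. -/
theorem stmt3 [RCLike 𝕜] [NormedAddCommGroup E] [NormedSpace 𝕜 E] [CompleteSpace E]
    (p q r : ℝ) (hp : 1 ≤ p) (hq : 1 ≤ q) (hqr : q ≤ r) (x : ℕ → E) (hx : MidSummable 𝕜 q p x) :
    MidSummable 𝕜 r p x ∧ midNorm 𝕜 r p x ≤ midNorm 𝕜 q p x := by
  have hp0 : (0:ℝ) < p := lt_of_lt_of_le one_pos hp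
  have hq0 : (0:ℝ) < q := lt_of_lt_of_le one_pos hq
  have key : ∀ xs : ℕ → StrongDual 𝕜 E, WeaklySummable 𝕜 p xs →
      Summable (fun j => (∑' n, ‖xs n (x j)‖ ^ p) ^ (r / p)) ∧
      (∑' j, (∑' n, ‖xs n (x j)‖ ^ p) ^ (r / p)) ^ (1 / r)
        ≤ (∑' j, (∑' n, ‖xs n (x j)‖ ^ p) ^ (q / p)) ^ (1 / q) := by
    intro xs hxs
    have hg0 : ∀ j, (0:ℝ) ≤ ∑' n, ‖xs n (x j)‖ ^ p :=
      fun j => tsum_nonneg fun n => Real.rpow_nonneg (norm_nonneg _) _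
    have hbq : ∀ s : ℝ, ∀ j, (∑' n, ‖xs n (x j)‖ ^ p) ^ (s / p)
        = ((∑' n, ‖xs n (x j)‖ ^ p) ^ (1 / p)) ^ s := by
      intro s j
      rw [← Real.rpow_mul (hg0 j), one_div, inv_mul_eq_div]
    have hsq : Summable fun j => ((∑' n, ‖xs n (x j)‖ ^ p) ^ (1 / p)) ^ q :=
      (hx xs hxs).congr fun j => hbq q j
    obtain ⟨h1, h2⟩ := lq_le_lr (fun j => Real.rpow_nonneg (hg0 j) _) hq0 hqr hsq
    constructor
    · exact h1.congr fun j => (hbq r j).symm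
    · calc (∑' j, (∑' n, ‖xs n (x j)‖ ^ p) ^ (r / p)) ^ (1 / r)
          = (∑' j, ((∑' n, ‖xs n (x j)‖ ^ p) ^ (1 / p)) ^ r) ^ (1 / r) := by
            rw [tsum_congr fun j => hbq r j]
        _ ≤ (∑' j, ((∑' n, ‖xs n (x j)‖ ^ p) ^ (1 / p)) ^ q) ^ (1 / q) := h2
        _ = (∑' j, (∑' n, ‖xs n (x j)‖ ^ p) ^ (q / p)) ^ (1 / q) := by
            rw [tsum_congr fun j => (hbq q j).symm]
  refine ⟨fun xs hxs => (key xs hxs).1, ?_⟩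
  haveI hne : Nonempty {xs : ℕ → StrongDual 𝕜 E // WeaklySummable 𝕜 p xs ∧ weakNorm 𝕜 p xs ≤ 1} := by
    refine ⟨⟨fun _ => 0, ?_, ?_⟩⟩
    · intro φ
      simpa [Real.zero_rpow (ne_of_gt hp0)] using summable_zero
    · rw [weakNorm]
      refine Real.iSup_le (fun φ => ?_) zero_le_one
      have hz : (∑' (j : ℕ), ‖φ.1 ((fun _ : ℕ => (0 : StrongDual 𝕜 E)) j)‖ ^ p) ^ (1 / p) = 0 := by
        simp [Real.zero_rpow (ne_of_gt hp0),
          Real.zero_rpow (show (1:ℝ)/p ≠ 0 by positivity),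
          Real.zero_rpow (inv_ne_zero (ne_of_gt hp0))]
      rw [hz]
      exact zero_le_one
  unfold midNorm
  exact ciSup_mono (mid_bddAbove hp hq x hx) fun i => (key i.1 i.2.1).2
end
end

section
/- Let E be a Banach space and 1 ≤ q ≤ p < ∞. If x = (x_j)_{j=1}^∞ is a mid (q,p)-summable sequence in E, then the operator Ψ_x : E* → ℓ_q defined by Ψ_x(x*) = (x*(x_j))_{j=1}^∞ is absolutely p-summing and π_p(Ψ_x) ≤ ‖(x_j)‖_{q,p}. -/
open NormedSpace MeasureTheory

noncomputable section

variable {𝕜 E F : Type*}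

section AuxLemmas

open Filter

variable {𝕜 : Type*} [RCLike 𝕜] {X : Type*} [NormedAddCommGroup X] [NormedSpace 𝕜 X]

private lemma rpow_rpow_one_div {a r : ℝ} (ha : 0 ≤ a) (hr : r ≠ 0) :
    (a ^ r) ^ (1 / r) = a := by
  rw [← Real.rpow_mul ha, mul_one_div, div_self hr, Real.rpow_one]

private lemma rpow_one_div_rpow {a r : ℝ} (ha : 0 ≤ a) (hr : r ≠ 0) :
    (a ^ (1 / r)) ^ r = a := by
  rw [← Real.rpow_mul ha, one_div, inv_mul_cancel₀ hr, Real.rpow_one]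

private lemma npow_rpow_comm {a : ℝ} (ha : 0 ≤ a) (m : ℕ) (r : ℝ) :
    (a ^ m) ^ r = (a ^ r) ^ m := by
  rw [← Real.rpow_natCast a m, ← Real.rpow_mul ha, mul_comm,
    Real.rpow_mul ha, Real.rpow_natCast]

/-- Closed-graph construction of the canonical operator into `ℓ_r`. -/
private lemma exists_clm (r : ℝ) (hr : 1 ≤ r) [Fact (1 ≤ ENNReal.ofReal r)] (g : ℕ → X)
    (h : ∀ φ : StrongDual 𝕜 X, Summable fun n => ‖φ (g n)‖ ^ r) :
    ∃ T : StrongDual 𝕜 X →L[𝕜] lp (fun _ : ℕ => 𝕜) (ENNReal.ofReal r),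
      ∀ (φ : StrongDual 𝕜 X) (j : ℕ), (T φ : ∀ _ : ℕ, 𝕜) j = φ (g j) := by
  have hr0 : (0:ℝ) < r := lt_of_lt_of_le one_pos hr
  have htr : (ENNReal.ofReal r).toReal = r := ENNReal.toReal_ofReal hr0.le
  have hmem : ∀ φ : StrongDual 𝕜 X,
      Memℓp (fun j => φ (g j)) (ENNReal.ofReal r) := fun φ =>
    memℓp_gen (by rw [htr]; exact h φ)
  let L : StrongDual 𝕜 X →ₗ[𝕜] lp (fun _ : ℕ => 𝕜) (ENNReal.ofReal r) :=
    { toFun := fun φ => ⟨fun j => φ (g j), hmem φ⟩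
      map_add' := fun φ ψ => by
        apply lp.ext
        rw [lp.coeFn_add]
        rfl
      map_smul' := fun c φ => by
        apply lp.ext
        rw [lp.coeFn_smul]
        rfl }
  have hclosed : ∀ (u : ℕ → StrongDual 𝕜 X) (φ : StrongDual 𝕜 X)
      (y : lp (fun _ : ℕ => 𝕜) (ENNReal.ofReal r)), Tendsto u atTop (nhds φ) →
      Tendsto (⇑L ∘ u) atTop (nhds y) → y = L φ := by
    intro u φ y hu hLu
    apply lp.ext
    funext j
    have h0 : Tendsto (fun m => ‖L (u m) - y‖) atTop (nhds 0) :=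
      tendsto_iff_norm_sub_tendsto_zero.mp hLu
    have hle : ∀ m, ‖(L (u m) : ∀ _ : ℕ, 𝕜) j - (y : ∀ _ : ℕ, 𝕜) j‖ ≤ ‖L (u m) - y‖ := by
      intro m
      have h1 := lp.norm_apply_le_norm
        ((ENNReal.ofReal_pos.mpr hr0).ne')
        (L (u m) - y) j
      simpa [lp.coeFn_sub] using h1
    have h2 : Tendsto (fun m => (L (u m) : ∀ _ : ℕ, 𝕜) j) atTop
        (nhds ((y : ∀ _ : ℕ, 𝕜) j)) :=
      tendsto_sub_nhds_zero_iff.mp (squeeze_zero_norm hle h0)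
    have h3 : Tendsto (fun m => (u m) (g j)) atTop (nhds (φ (g j))) :=
      ((ContinuousLinearMap.apply 𝕜 𝕜 (g j)).continuous.tendsto φ).comp hu
    exact tendsto_nhds_unique h2 h3
  exact ⟨ContinuousLinearMap.ofSeqClosedGraph hclosed, fun φ j => rfl⟩

/-- A weakly `p`-summable sequence with weak norm at most 1 satisfies the expected bound. -/
private lemma tsum_le_norm_rpow {p : ℝ} (hp : 1 ≤ p) (xs : ℕ → X)
    (hws : WeaklySummable 𝕜 p xs) (hn : weakNorm 𝕜 p xs ≤ 1) :
    ∀ Φ : StrongDual 𝕜 X, ∑' n, ‖Φ (xs n)‖ ^ p ≤ ‖Φ‖ ^ p := by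
  have hp0 : (0:ℝ) < p := lt_of_lt_of_le one_pos hp
  haveI : Fact (1 ≤ ENNReal.ofReal p) := ⟨ENNReal.one_le_ofReal.mpr hp⟩
  obtain ⟨T, hT⟩ := exists_clm p hp xs hws
  have htr : (ENNReal.ofReal p).toReal = p := ENNReal.toReal_ofReal hp0.le
  have hbdd : BddAbove (Set.range fun φ : {φ : StrongDual 𝕜 X // ‖φ‖ ≤ 1} =>
      (∑' n, ‖φ.1 (xs n)‖ ^ p) ^ (1 / p)) := by
    refine ⟨‖T‖, ?_⟩
    rintro v ⟨φ, rfl⟩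
    have heq : (∑' n, ‖φ.1 (xs n)‖ ^ p) ^ (1/p) = ‖T φ.1‖ := by
      rw [lp.norm_eq_tsum_rpow (by rw [htr]; exact hp0) (T φ.1), htr]
      congr 1
      exact tsum_congr fun n => by rw [hT φ.1 n]
    show (∑' n, ‖φ.1 (xs n)‖ ^ p) ^ (1 / p) ≤ ‖T‖
    rw [heq]
    calc ‖T φ.1‖ ≤ ‖T‖ * ‖φ.1‖ := T.le_opNorm φ.1
      _ ≤ ‖T‖ * 1 := mul_le_mul_of_nonneg_left φ.2 (norm_nonneg T)
      _ = ‖T‖ := mul_one _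
  have hball : ∀ Φ : StrongDual 𝕜 X, ‖Φ‖ ≤ 1 → ∑' n, ‖Φ (xs n)‖ ^ p ≤ 1 := by
    intro Φ hΦ
    have h1 : (∑' n, ‖Φ (xs n)‖ ^ p) ^ (1/p) ≤ 1 :=
      le_trans (le_ciSup hbdd ⟨Φ, hΦ⟩) hn
    have h2 : (0:ℝ) ≤ ∑' n, ‖Φ (xs n)‖ ^ p :=
      tsum_nonneg fun n => Real.rpow_nonneg (norm_nonneg _) _
    calc ∑' n, ‖Φ (xs n)‖ ^ p = ((∑' n, ‖Φ (xs n)‖ ^ p) ^ (1/p)) ^ p :=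
          (rpow_one_div_rpow h2 hp0.ne').symm
      _ ≤ 1 ^ p := Real.rpow_le_rpow (Real.rpow_nonneg h2 _) h1 hp0.le
      _ = 1 := Real.one_rpow p
  intro Φ
  rcases eq_or_ne Φ 0 with rfl | hΦ
  · have hz : ∀ n, ‖(0 : StrongDual 𝕜 X) (xs n)‖ ^ p = 0 := fun n => by
      rw [ContinuousLinearMap.zero_apply, norm_zero, Real.zero_rpow hp0.ne']
    rw [tsum_congr hz, tsum_zero, norm_zero, Real.zero_rpow hp0.ne']
  · have hn0 : 0 < ‖Φ‖ := norm_pos_iff.mpr hΦ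
    have hinv : (0:ℝ) ≤ ‖Φ‖⁻¹ := inv_nonneg.mpr hn0.le
    have hΨnorm : ‖(RCLike.ofReal ‖Φ‖⁻¹ : 𝕜) • Φ‖ ≤ 1 := by
      rw [norm_smul, RCLike.norm_ofReal, abs_of_nonneg hinv, inv_mul_cancel₀ hn0.ne']
    have h1 := hball _ hΨnorm
    have heach : ∀ n, ‖((RCLike.ofReal ‖Φ‖⁻¹ : 𝕜) • Φ) (xs n)‖ ^ p
        = ‖Φ‖⁻¹ ^ p * ‖Φ (xs n)‖ ^ p := by
      intro n
      rw [ContinuousLinearMap.smul_apply, norm_smul, RCLike.norm_ofReal,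
        abs_of_nonneg hinv, Real.mul_rpow hinv (norm_nonneg _)]
    rw [tsum_congr heach, tsum_mul_left, Real.inv_rpow (norm_nonneg Φ)] at h1
    have hppos : 0 < ‖Φ‖ ^ p := Real.rpow_pos_of_pos hn0 p
    calc ∑' n, ‖Φ (xs n)‖ ^ p
        = ‖Φ‖ ^ p * ((‖Φ‖ ^ p)⁻¹ * ∑' n, ‖Φ (xs n)‖ ^ p) := by
          rw [← mul_assoc, mul_inv_cancel₀ hppos.ne', one_mul]
      _ ≤ ‖Φ‖ ^ p * 1 := mul_le_mul_of_nonneg_left h1 hppos.le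
      _ = ‖Φ‖ ^ p := mul_one _

end AuxLemmas

section AuxLemmas2

open Filter

variable {𝕜 : Type*} [RCLike 𝕜] {E : Type*} [NormedAddCommGroup E] [NormedSpace 𝕜 E]

private lemma summable_single {p q : ℝ} (hq : 1 ≤ q) (hqp : q ≤ p) (x : ℕ → E)
    (hx : MidSummable 𝕜 q p x) (φ : StrongDual 𝕜 E) :
    Summable fun j => ‖φ (x j)‖ ^ q := by
  have hp0 : (0:ℝ) < p := by linarith
  have hp' : p ≠ 0 := hp0.ne'
  have hws : WeaklySummable 𝕜 p (fun n => if n = 0 then φ else 0) := by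
    intro Φ
    apply summable_of_ne_finset_zero (s := ({0} : Finset ℕ))
    intro n hn
    have hn' : n ≠ 0 := by simpa using hn
    simp [hn', Real.zero_rpow hp']
  have h := hx (fun n => if n = 0 then φ else 0) hws
  refine h.congr fun j => ?_
  have h1 : (∑' n, ‖(if n = 0 then φ else 0 : StrongDual 𝕜 E) (x j)‖ ^ p)
      = ‖φ (x j)‖ ^ p := by
    rw [tsum_eq_single 0 (fun n hn => by simp [hn, Real.zero_rpow hp'])]
    simp
  rw [h1, ← Real.rpow_mul (norm_nonneg _)]
  congr 1
  field_simp

private lemma pad_tsum {k : ℕ} (z : Fin k → StrongDual 𝕜 E)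
    (zs : ℕ → StrongDual 𝕜 E)
    (hzs : ∀ j : Fin k, zs j = z j) (hzs' : ∀ n, k ≤ n → zs n = 0)
    (g : StrongDual 𝕜 E → ℝ) (hg : g 0 = 0) :
    ∑' n, g (zs n) = ∑ j : Fin k, g (z j) := by
  rw [tsum_eq_sum (s := Finset.range k)
    (fun n hn => by rw [hzs' n (by simpa using hn), hg])]
  rw [← Fin.sum_univ_eq_sum_range (fun n => g (zs n)) k]
  exact Finset.sum_congr rfl fun i _ => by rw [hzs i]

private lemma minkowski_fin {s : ℝ} (hs : 1 ≤ s) {k : ℕ} (T : Finset ℕ)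
    (a : ℕ → Fin k → ℝ) (ha : ∀ n j, 0 ≤ a n j) :
    (∑ j : Fin k, (∑ n ∈ T, a n j) ^ s) ^ (1 / s)
      ≤ ∑ n ∈ T, (∑ j : Fin k, a n j ^ s) ^ (1 / s) := by
  have hs0 : (0:ℝ) < s := by linarith
  classical
  induction T using Finset.induction_on with
  | empty =>
    simp only [Finset.sum_empty, Real.zero_rpow hs0.ne', Finset.sum_const_zero]
    rw [Real.zero_rpow (one_div_ne_zero hs0.ne')]
  | @insert n T hn ih =>
    simp only [Finset.sum_insert hn]
    have h1 : (∑ j : Fin k, (a n j + ∑ n' ∈ T, a n' j) ^ s) ^ (1/s) ≤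
        (∑ j : Fin k, a n j ^ s) ^ (1/s)
          + (∑ j : Fin k, (∑ n' ∈ T, a n' j) ^ s) ^ (1/s) :=
      Real.Lp_add_le_of_nonneg (f := fun j => a n j)
        (g := fun j => ∑ n' ∈ T, a n' j) (s := Finset.univ) hs
        (fun j _ => ha n j) (fun j _ => Finset.sum_nonneg fun n' _ => ha n' j)
    exact h1.trans (add_le_add_right ih _)

private lemma minkowski_tsum {s : ℝ} (hs : 1 ≤ s) {k : ℕ}
    (a : ℕ → Fin k → ℝ) (ha : ∀ n j, 0 ≤ a n j)
    (hsum : ∀ j, Summable fun n => a n j)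
    (hS : Summable fun n => (∑ j : Fin k, a n j ^ s) ^ (1 / s)) :
    (∑ j : Fin k, (∑' n, a n j) ^ s) ^ (1 / s)
      ≤ ∑' n, (∑ j : Fin k, a n j ^ s) ^ (1 / s) := by
  have hs0 : (0:ℝ) < s := by linarith
  have htend : Tendsto (fun T : Finset ℕ => (∑ j : Fin k, (∑ n ∈ T, a n j) ^ s) ^ (1 / s))
      atTop (nhds ((∑ j : Fin k, (∑' n, a n j) ^ s) ^ (1 / s))) := by
    apply Filter.Tendsto.rpow_const
    · apply tendsto_finset_sum
      intro j _
      exact (hsum j).hasSum.rpow_const (Or.inr hs0.le)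
    · exact Or.inr (by positivity)
  refine le_of_tendsto htend (Filter.Eventually.of_forall fun T => ?_)
  refine (minkowski_fin hs T a ha).trans (Summable.sum_le_tsum T (fun n _ => ?_) hS)
  exact Real.rpow_nonneg (Finset.sum_nonneg fun j _ => Real.rpow_nonneg (ha n j) s) _

private lemma midNorm_bddAbove (p q : ℝ) (hq : 1 ≤ q) (hqp : q ≤ p)
    (x : ℕ → E) (hx : MidSummable 𝕜 q p x) :
    BddAbove (Set.range fun xs : {xs : ℕ → StrongDual 𝕜 E //
        WeaklySummable 𝕜 p xs ∧ weakNorm 𝕜 p xs ≤ 1} =>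
      (∑' j, (∑' n, ‖xs.1 n (x j)‖ ^ p) ^ (q / p)) ^ (1 / q)) := by
  by_contra hcon
  have hq0 : (0:ℝ) < q := by linarith
  have hp1 : (1:ℝ) ≤ p := hq.trans hqp
  have hp0 : (0:ℝ) < p := by linarith
  have hpq : p * (q / p) = q := by field_simp
  -- choose bad sequences
  have H : ∀ m : ℕ, ∃ xs : {xs : ℕ → StrongDual 𝕜 E //
      WeaklySummable 𝕜 p xs ∧ weakNorm 𝕜 p xs ≤ 1},
      (2:ℝ)^m * (m+1) < (∑' j, (∑' n, ‖xs.1 n (x j)‖ ^ p) ^ (q / p)) ^ (1 / q) := by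
    intro m
    obtain ⟨v, ⟨xs, rfl⟩, hv⟩ := not_bddAbove_iff.mp hcon ((2:ℝ)^m * (m+1))
    exact ⟨xs, hv⟩
  choose u hu using H
  have hcpos : ∀ m : ℕ, (0:ℝ) < (2:ℝ)⁻¹ ^ m := fun m => pow_pos (by norm_num) m
  -- the concatenated sequence, indexed by pairs
  set F : ℕ × ℕ → StrongDual 𝕜 E :=
    fun mn => (RCLike.ofReal ((2:ℝ)⁻¹ ^ mn.1) : 𝕜) • (u mn.1).1 mn.2 with hF
  have hFnorm : ∀ (Φ : StrongDual 𝕜 (StrongDual 𝕜 E)) (m n : ℕ),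
      ‖Φ (F (m, n))‖ ^ p = ((2:ℝ)⁻¹ ^ m) ^ p * ‖Φ ((u m).1 n)‖ ^ p := by
    intro Φ m n
    simp only [hF]
    rw [_root_.map_smul, norm_smul, RCLike.norm_ofReal, abs_of_nonneg (hcpos _).le,
      Real.mul_rpow (hcpos _).le (norm_nonneg _)]
  have hFsum : ∀ Φ : StrongDual 𝕜 (StrongDual 𝕜 E),
      Summable fun mn : ℕ × ℕ => ‖Φ (F mn)‖ ^ p := by
    intro Φ
    refine (summable_prod_of_nonneg
      (fun mn => Real.rpow_nonneg (norm_nonneg _) _)).mpr ⟨?_, ?_⟩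
    · intro m
      refine (((u m).2.1 Φ).mul_left (((2:ℝ)⁻¹ ^ m) ^ p)).congr fun n => ?_
      exact (hFnorm Φ m n).symm
    · have hb : ∀ m : ℕ, (∑' n, ‖Φ (F (m, n))‖ ^ p)
          ≤ (((2:ℝ)⁻¹ ^ p) ^ m) * ‖Φ‖ ^ p := by
        intro m
        have h1 : (∑' n, ‖Φ (F (m, n))‖ ^ p)
            = ((2:ℝ)⁻¹ ^ m) ^ p * ∑' n, ‖Φ ((u m).1 n)‖ ^ p := by
          rw [tsum_congr (fun n => hFnorm Φ m n), tsum_mul_left]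
        rw [h1, npow_rpow_comm (by norm_num : (0:ℝ) ≤ 2⁻¹)]
        exact mul_le_mul_of_nonneg_left
          (tsum_le_norm_rpow hp1 (u m).1 (u m).2.1 (u m).2.2 Φ)
          (pow_nonneg (Real.rpow_nonneg (by norm_num) p) m)
      refine Summable.of_nonneg_of_le
        (fun m => tsum_nonneg fun n => Real.rpow_nonneg (norm_nonneg _) _) hb ?_
      exact (summable_geometric_of_lt_one (Real.rpow_nonneg (by norm_num) p)
        (Real.rpow_lt_one (by norm_num) (by norm_num) hp0)).mul_right _
  -- weak summability of the concatenation
  have hXSws : WeaklySummable 𝕜 p (fun n => F (Nat.pairEquiv.symm n)) := by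
    intro Φ
    exact (Equiv.summable_iff (f := fun mn : ℕ × ℕ => ‖Φ (F mn)‖ ^ p)
      Nat.pairEquiv.symm).mpr (hFsum Φ)
  have hSum := hx _ hXSws
  have hWnn : (0:ℝ) ≤ ∑' j, (∑' n, ‖F (Nat.pairEquiv.symm n) (x j)‖ ^ p) ^ (q / p) :=
    tsum_nonneg fun j => Real.rpow_nonneg
      (tsum_nonneg fun n => Real.rpow_nonneg (norm_nonneg _) _) _
  -- evaluation versions
  have hFnorm' : ∀ (y : E) (m n : ℕ),
      ‖(F (m, n)) y‖ ^ p = ((2:ℝ)⁻¹ ^ m) ^ p * ‖(u m).1 n y‖ ^ p := by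
    intro y m n
    have := hFnorm (NormedSpace.inclusionInDoubleDual 𝕜 E y) m n
    simpa only [NormedSpace.dual_def] using this
  have hFsum' : ∀ y : E, Summable fun mn : ℕ × ℕ => ‖(F mn) y‖ ^ p := by
    intro y
    refine (hFsum (NormedSpace.inclusionInDoubleDual 𝕜 E y)).congr fun mn => ?_
    rw [NormedSpace.dual_def]
  -- key lower bound
  have key : ∀ m : ℕ, ((m:ℝ) + 1)
      ≤ ∑' j, (∑' n, ‖F (Nat.pairEquiv.symm n) (x j)‖ ^ p) ^ (q / p) := by
    intro m
    have hBnn : ∀ j, (0:ℝ) ≤ ∑' n, ‖(u m).1 n (x j)‖ ^ p :=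
      fun j => tsum_nonneg fun n => Real.rpow_nonneg (norm_nonneg _) _
    have hinner : ∀ j, ((2:ℝ)⁻¹ ^ m) ^ p * (∑' n, ‖(u m).1 n (x j)‖ ^ p)
        ≤ ∑' n, ‖F (Nat.pairEquiv.symm n) (x j)‖ ^ p := by
      intro j
      have h1 : (∑' n, ‖F (Nat.pairEquiv.symm n) (x j)‖ ^ p)
          = ∑' mn : ℕ × ℕ, ‖F mn (x j)‖ ^ p :=
        Equiv.tsum_eq Nat.pairEquiv.symm (fun mn => ‖F mn (x j)‖ ^ p)
      have hsumf : Summable fun n : ℕ => ‖F (m, n) (x j)‖ ^ p := by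
        refine ((((u m).2.1 (NormedSpace.inclusionInDoubleDual 𝕜 E (x j))).congr
          (fun n => by rw [NormedSpace.dual_def])).mul_left
          (((2:ℝ)⁻¹ ^ m) ^ p)).congr fun n => ?_
        exact (hFnorm' (x j) m n).symm
      have h2 : ((2:ℝ)⁻¹ ^ m) ^ p * (∑' n, ‖(u m).1 n (x j)‖ ^ p)
          = ∑' n : ℕ, ‖F (m, n) (x j)‖ ^ p := by
        rw [← tsum_mul_left]
        exact tsum_congr fun n => (hFnorm' (x j) m n).symm
      rw [h1, h2]
      refine Summable.tsum_le_tsum_of_inj (fun n => (m, n))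
        (fun a b hab => by simpa using congrArg Prod.snd hab)
        (fun mn _ => Real.rpow_nonneg (norm_nonneg _) _)
        (fun n => le_rfl) hsumf (hFsum' (x j))
    have heq : ∀ j, (((2:ℝ)⁻¹ ^ m) ^ p * (∑' n, ‖(u m).1 n (x j)‖ ^ p)) ^ (q/p)
        = ((2:ℝ)⁻¹ ^ m) ^ q * ((∑' n, ‖(u m).1 n (x j)‖ ^ p)) ^ (q/p) := by
      intro j
      rw [Real.mul_rpow (Real.rpow_nonneg (hcpos m).le p) (hBnn j),
        ← Real.rpow_mul (hcpos m).le, hpq]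
    have hsmall : Summable fun j =>
        ((2:ℝ)⁻¹ ^ m) ^ q * ((∑' n, ‖(u m).1 n (x j)‖ ^ p)) ^ (q/p) :=
      (hx (u m).1 (u m).2.1).mul_left _
    have h7 : ((2:ℝ)⁻¹ ^ m) ^ q * (∑' j, ((∑' n, ‖(u m).1 n (x j)‖ ^ p)) ^ (q/p))
        ≤ ∑' j, (∑' n, ‖F (Nat.pairEquiv.symm n) (x j)‖ ^ p) ^ (q / p) := by
      rw [← tsum_mul_left]
      refine Summable.tsum_le_tsum (fun j => ?_) hsmall hSum
      rw [← heq j]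
      exact Real.rpow_le_rpow
        (mul_nonneg (Real.rpow_nonneg (hcpos m).le p) (hBnn j)) (hinner j)
        (by positivity)
    -- lower bound for the chosen sequence
    have hWmnn : (0:ℝ) ≤ ∑' j, ((∑' n, ‖(u m).1 n (x j)‖ ^ p)) ^ (q/p) :=
      tsum_nonneg fun j => Real.rpow_nonneg (hBnn j) _
    have h3 : ((2:ℝ)^m * (m+1)) ^ q
        ≤ ∑' j, ((∑' n, ‖(u m).1 n (x j)‖ ^ p)) ^ (q/p) := by
      calc ((2:ℝ)^m * (m+1)) ^ q
          ≤ ((∑' j, ((∑' n, ‖(u m).1 n (x j)‖ ^ p)) ^ (q/p)) ^ (1/q)) ^ q :=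
            Real.rpow_le_rpow (by positivity) (hu m).le hq0.le
        _ = _ := rpow_one_div_rpow hWmnn hq0.ne'
    have h4 : ((m:ℝ) + 1) ≤ ((2:ℝ)⁻¹ ^ m) ^ q
        * (∑' j, ((∑' n, ‖(u m).1 n (x j)‖ ^ p)) ^ (q/p)) := by
      have hc2 : ((2:ℝ)⁻¹ ^ m) ^ q * ((2:ℝ)^m * (m+1)) ^ q = ((m:ℝ)+1) ^ q := by
        rw [← Real.mul_rpow (hcpos m).le (by positivity), ← mul_assoc, ← mul_pow]
        norm_num
      have h5 : ((m:ℝ)+1) ^ q ≤ ((2:ℝ)⁻¹ ^ m) ^ q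
          * (∑' j, ((∑' n, ‖(u m).1 n (x j)‖ ^ p)) ^ (q/p)) := by
        rw [← hc2]
        exact mul_le_mul_of_nonneg_left h3 (Real.rpow_nonneg (hcpos m).le q)
      calc ((m:ℝ) + 1) = ((m:ℝ)+1) ^ (1:ℝ) := (Real.rpow_one _).symm
        _ ≤ ((m:ℝ)+1) ^ q := Real.rpow_le_rpow_of_exponent_le
            (by exact_mod_cast Nat.le_add_left 1 m) hq
        _ ≤ _ := h5
    exact h4.trans h7
  obtain ⟨m, hm⟩ := exists_nat_gt
    (∑' j, (∑' n, ‖F (Nat.pairEquiv.symm n) (x j)‖ ^ p) ^ (q / p))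
  have hkm := key m
  have : ((m:ℝ)) < (m:ℝ) + 1 := by linarith
  linarith

end AuxLemmas2

/-- if `1 ≤ q ≤ p` and `x` is mid `(q,p)`-summable then the operator
`Ψ_x : E* → ℓ_q`, `Ψ_x(x^*) = (x^*(x_j))_j`, is absolutely `p`-summing with
`π_p(Ψ_x) ≤ ‖(x_j)‖_{q,p}`. -/
theorem stmt6 [RCLike 𝕜] [NormedAddCommGroup E] [NormedSpace 𝕜 E] [CompleteSpace E]
    (p q : ℝ) (hq : 1 ≤ q) (hqp : q ≤ p) [Fact (1 ≤ ENNReal.ofReal q)]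
    (x : ℕ → E) (hx : MidSummable 𝕜 q p x) :
    ∃ Ψ : StrongDual 𝕜 E →L[𝕜] lp (fun _ : ℕ => 𝕜) (ENNReal.ofReal q),
      (∀ (φ : StrongDual 𝕜 E) (j : ℕ), (Ψ φ : ∀ _ : ℕ, 𝕜) j = φ (x j)) ∧
      AbsolutelySumming 𝕜 p Ψ ∧ piNorm 𝕜 p Ψ ≤ midNorm 𝕜 q p x := by
  have hq0 : (0:ℝ) < q := by linarith
  have hp1 : (1:ℝ) ≤ p := hq.trans hqp
  have hp0 : (0:ℝ) < p := by linarith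
  have hq' : q ≠ 0 := hq0.ne'
  have hp' : p ≠ 0 := hp0.ne'
  have hpq : p * (q / p) = q := by field_simp
  have hqp' : q * (p / q) = p := by field_simp
  have hsummq : ∀ φ : StrongDual 𝕜 E, Summable fun j => ‖φ (x j)‖ ^ q :=
    fun φ => summable_single hq hqp x hx φ
  obtain ⟨Ψ, hΨ⟩ := exists_clm q hq x hsummq
  have htq : (ENNReal.ofReal q).toReal = q := ENNReal.toReal_ofReal hq0.le
  have hΨnorm : ∀ φ : StrongDual 𝕜 E, ‖Ψ φ‖ = (∑' n, ‖φ (x n)‖ ^ q) ^ (1 / q) := by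
    intro φ
    rw [lp.norm_eq_tsum_rpow (by rw [htq]; exact hq0) (Ψ φ), htq]
    congr 1
    exact tsum_congr fun n => by rw [hΨ φ n]
  have hbddM := midNorm_bddAbove p q hq hqp x hx
  have hM0 : 0 ≤ midNorm 𝕜 q p x :=
    Real.iSup_nonneg fun xs => Real.rpow_nonneg (tsum_nonneg fun j =>
      Real.rpow_nonneg (tsum_nonneg fun n => Real.rpow_nonneg (norm_nonneg _) _) _) _
  have hS0g : ∀ (k : ℕ) (z : Fin k → StrongDual 𝕜 E),
      0 ≤ ⨆ φ : {φ : StrongDual 𝕜 (StrongDual 𝕜 E) // ‖φ‖ ≤ 1}, (∑ j, ‖φ.1 (z j)‖ ^ p) ^ (1 / p) :=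
    fun k z => Real.iSup_nonneg fun φ => Real.rpow_nonneg
      (Finset.sum_nonneg fun j _ => Real.rpow_nonneg (norm_nonneg _) _) _
  -- the key inequality
  have key : ∀ (k : ℕ) (z : Fin k → StrongDual 𝕜 E),
      (∑ j, ‖Ψ (z j)‖ ^ p) ^ (1 / p) ≤ midNorm 𝕜 q p x *
        ⨆ φ : {φ : StrongDual 𝕜 (StrongDual 𝕜 E) // ‖φ‖ ≤ 1}, (∑ j, ‖φ.1 (z j)‖ ^ p) ^ (1 / p) := by
    intro k z
    have hbddS : BddAbove (Set.range fun φ : {φ : StrongDual 𝕜 (StrongDual 𝕜 E) // ‖φ‖ ≤ 1} =>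
        (∑ j, ‖φ.1 (z j)‖ ^ p) ^ (1 / p)) := by
      refine ⟨(∑ j, ‖z j‖ ^ p) ^ (1 / p), ?_⟩
      rintro v ⟨φ, rfl⟩
      refine Real.rpow_le_rpow
        (Finset.sum_nonneg fun j _ => Real.rpow_nonneg (norm_nonneg _) _)
        (Finset.sum_le_sum fun j _ => Real.rpow_le_rpow (norm_nonneg _) ?_ hp0.le)
        (by positivity)
      calc ‖φ.1 (z j)‖ ≤ ‖φ.1‖ * ‖z j‖ := φ.1.le_opNorm (z j)
        _ ≤ 1 * ‖z j‖ := mul_le_mul_of_nonneg_right φ.2 (norm_nonneg _)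
        _ = ‖z j‖ := one_mul _
    have hS0 := hS0g k z
    rcases eq_or_lt_of_le hS0 with hS | hS
    · -- degenerate case: the sup is zero, all z j vanish
      have hz : ∀ j, z j = 0 := by
        intro j
        have hzero : ∀ Φ : StrongDual 𝕜 (StrongDual 𝕜 E), ‖Φ‖ ≤ 1 → Φ (z j) = 0 := by
          intro Φ hΦ
          have h1 : (∑ i, ‖Φ (z i)‖ ^ p) ^ (1 / p) ≤ 0 :=
            (le_ciSup hbddS ⟨Φ, hΦ⟩).trans hS.symm.le
          have hsnn : (0:ℝ) ≤ ∑ i, ‖Φ (z i)‖ ^ p :=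
            Finset.sum_nonneg fun i _ => Real.rpow_nonneg (norm_nonneg _) _
          have hsum0 : ∑ i, ‖Φ (z i)‖ ^ p = 0 := by
            by_contra hne
            have hpos : 0 < ∑ i, ‖Φ (z i)‖ ^ p := lt_of_le_of_ne hsnn (Ne.symm hne)
            exact absurd h1 (not_le.mpr (Real.rpow_pos_of_pos hpos _))
          have hterm : ‖Φ (z j)‖ ^ p = 0 :=
            (Finset.sum_eq_zero_iff_of_nonneg fun i _ =>
              Real.rpow_nonneg (norm_nonneg _) _).mp hsum0 j (Finset.mem_univ j)
          have hnz : ‖Φ (z j)‖ = 0 := by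
            by_contra hne
            have h0 : 0 < ‖Φ (z j)‖ := lt_of_le_of_ne (norm_nonneg _) (Ne.symm hne)
            exact absurd hterm (ne_of_gt (Real.rpow_pos_of_pos h0 p))
          simpa using hnz
        ext y
        rcases eq_or_ne y 0 with rfl | hy
        · simp
        · have hy0 : 0 < ‖y‖ := norm_pos_iff.mpr hy
          have hball : ‖inclusionInDoubleDual 𝕜 E ((RCLike.ofReal ‖y‖⁻¹ : 𝕜) • y)‖ ≤ 1 := by
            refine (double_dual_bound 𝕜 E _).trans ?_
            rw [norm_smul, RCLike.norm_ofReal, abs_of_nonneg (inv_nonneg.mpr hy0.le),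
              inv_mul_cancel₀ hy0.ne']
          have h1 := hzero _ hball
          rw [dual_def, _root_.map_smul] at h1
          have hc : (RCLike.ofReal ‖y‖⁻¹ : 𝕜) ≠ 0 := by
            simp only [ne_eq, RCLike.ofReal_eq_zero]
            positivity
          rcases smul_eq_zero.mp h1 with h | h
          · exact absurd h hc
          · simpa using h
      have hL : (∑ j, ‖Ψ (z j)‖ ^ p) = 0 :=
        Finset.sum_eq_zero fun j _ => by
          rw [hz j, map_zero, norm_zero, Real.zero_rpow hp']
      rw [hL, Real.zero_rpow (one_div_ne_zero hp')]
      exact mul_nonneg hM0 hS0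
    · -- main case
      set S : ℝ := ⨆ φ : {φ : StrongDual 𝕜 (StrongDual 𝕜 E) // ‖φ‖ ≤ 1},
        (∑ j, ‖φ.1 (z j)‖ ^ p) ^ (1 / p) with hSdef
      have hSnn : (0:ℝ) ≤ S := hS.le
      have hSinv : (0:ℝ) ≤ S⁻¹ := inv_nonneg.mpr hSnn
      -- padded sequence
      set zs : ℕ → StrongDual 𝕜 E := fun n => if h : n < k then z ⟨n, h⟩ else 0 with hzsdef
      have hzs1 : ∀ j : Fin k, zs j = z j := fun j => by
        simp only [hzsdef]
        rw [dif_pos j.isLt]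
      have hzs2 : ∀ n, k ≤ n → zs n = 0 := fun n hn => by
        simp only [hzsdef]
        rw [dif_neg (not_lt.mpr hn)]
      have hpad : ∀ g : StrongDual 𝕜 E → ℝ, g 0 = 0 →
          ∑' n, g (zs n) = ∑ j, g (z j) := fun g hg => pad_tsum z zs hzs1 hzs2 g hg
      have hzs_ws : WeaklySummable 𝕜 p zs := by
        intro Φ
        apply summable_of_ne_finset_zero (s := Finset.range k)
        intro n hn
        rw [hzs2 n (by simpa using hn), map_zero, norm_zero, Real.zero_rpow hp']
      -- normalized sequence
      set xs : ℕ → StrongDual 𝕜 E := fun n => (RCLike.ofReal S⁻¹ : 𝕜) • zs n with hxsdef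
      have hxs_eval : ∀ (Φ : StrongDual 𝕜 (StrongDual 𝕜 E)) (n : ℕ),
          ‖Φ (xs n)‖ ^ p = S⁻¹ ^ p * ‖Φ (zs n)‖ ^ p := by
        intro Φ n
        simp only [hxsdef]
        rw [_root_.map_smul, norm_smul, RCLike.norm_ofReal, abs_of_nonneg hSinv,
          Real.mul_rpow hSinv (norm_nonneg _)]
      have hxs_eval' : ∀ (y : E) (n : ℕ),
          ‖(xs n) y‖ ^ p = S⁻¹ ^ p * ‖(zs n) y‖ ^ p := by
        intro y n
        simp only [hxsdef]
        rw [ContinuousLinearMap.smul_apply, norm_smul, RCLike.norm_ofReal,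
          abs_of_nonneg hSinv, Real.mul_rpow hSinv (norm_nonneg _)]
      have hxs_ws : WeaklySummable 𝕜 p xs := fun Φ =>
        ((hzs_ws Φ).mul_left _).congr fun n => (hxs_eval Φ n).symm
      haveI : Nonempty {φ : StrongDual 𝕜 (StrongDual 𝕜 E) // ‖φ‖ ≤ 1} :=
        ⟨⟨(0 : StrongDual 𝕜 (StrongDual 𝕜 E)),
          ContinuousLinearMap.opNorm_le_bound _ zero_le_one (fun v => by simp)⟩⟩
      have hxs_wn : weakNorm 𝕜 p xs ≤ 1 := by
        refine ciSup_le fun φ => ?_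
        have h1 : ∑' n, ‖φ.1 (xs n)‖ ^ p = S⁻¹ ^ p * ∑ j, ‖φ.1 (z j)‖ ^ p := by
          rw [tsum_congr (hxs_eval φ.1), tsum_mul_left,
            hpad (fun v => ‖φ.1 v‖ ^ p) (by
              show ‖φ.1 (0 : StrongDual 𝕜 E)‖ ^ p = 0
              rw [map_zero, norm_zero, Real.zero_rpow hp'])]
        rw [h1, Real.mul_rpow (Real.rpow_nonneg hSinv _)
          (Finset.sum_nonneg fun j _ => Real.rpow_nonneg (norm_nonneg _) _),
          rpow_rpow_one_div hSinv hp']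
        have h2 : (∑ j, ‖φ.1 (z j)‖ ^ p) ^ (1/p) ≤ S := le_ciSup hbddS φ
        calc S⁻¹ * (∑ j, ‖φ.1 (z j)‖ ^ p) ^ (1/p) ≤ S⁻¹ * S :=
              mul_le_mul_of_nonneg_left h2 hSinv
          _ = 1 := inv_mul_cancel₀ hS.ne'
      -- value bound from midNorm
      have hval : (∑' j, (∑' n, ‖xs n (x j)‖ ^ p) ^ (q / p)) ^ (1 / q)
          ≤ midNorm 𝕜 q p x :=
        le_ciSup hbddM ⟨xs, hxs_ws, hxs_wn⟩
      -- identify inner sums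
      have hzs_x : ∀ n, ∑' m, ‖(zs m) (x n)‖ ^ p = ∑ j, ‖(z j) (x n)‖ ^ p := fun n =>
        hpad (fun v => ‖v (x n)‖ ^ p)
          (by
            show ‖(0 : StrongDual 𝕜 E) (x n)‖ ^ p = 0
            rw [ContinuousLinearMap.zero_apply, norm_zero, Real.zero_rpow hp'])
      have hDnn : ∀ n, (0:ℝ) ≤ ∑ j, ‖(z j) (x n)‖ ^ p :=
        fun n => Finset.sum_nonneg fun j _ => Real.rpow_nonneg (norm_nonneg _) _
      have hRsum : Summable fun n => (∑ j, ‖(z j) (x n)‖ ^ p) ^ (q / p) :=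
        (hx zs hzs_ws).congr fun n => by rw [hzs_x n]
      have hW : ∀ n, (∑' m, ‖(xs m) (x n)‖ ^ p) ^ (q / p)
          = S⁻¹ ^ q * (∑ j, ‖(z j) (x n)‖ ^ p) ^ (q / p) := by
        intro n
        have h1 : ∑' m, ‖(xs m) (x n)‖ ^ p = S⁻¹ ^ p * ∑ j, ‖(z j) (x n)‖ ^ p := by
          rw [tsum_congr (fun m => hxs_eval' (x n) m), tsum_mul_left, hzs_x n]
        rw [h1, Real.mul_rpow (Real.rpow_nonneg hSinv _) (hDnn n),
          ← Real.rpow_mul hSinv, hpq]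
      have hRle : ∑' n, (∑ j, ‖(z j) (x n)‖ ^ p) ^ (q / p) ≤ S ^ q * midNorm 𝕜 q p x ^ q := by
        have h1 : (∑' n, (∑' m, ‖(xs m) (x n)‖ ^ p) ^ (q / p))
            = S⁻¹ ^ q * ∑' n, (∑ j, ‖(z j) (x n)‖ ^ p) ^ (q / p) := by
          rw [tsum_congr hW, tsum_mul_left]
        have hnn : (0:ℝ) ≤ ∑' n, (∑' m, ‖(xs m) (x n)‖ ^ p) ^ (q / p) :=
          tsum_nonneg fun n => Real.rpow_nonneg
            (tsum_nonneg fun m => Real.rpow_nonneg (norm_nonneg _) _) _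
        have h2 : ∑' n, (∑' m, ‖(xs m) (x n)‖ ^ p) ^ (q / p) ≤ midNorm 𝕜 q p x ^ q := by
          calc ∑' n, (∑' m, ‖(xs m) (x n)‖ ^ p) ^ (q / p)
              = ((∑' n, (∑' m, ‖(xs m) (x n)‖ ^ p) ^ (q / p)) ^ (1/q)) ^ q :=
                (rpow_one_div_rpow hnn hq').symm
            _ ≤ midNorm 𝕜 q p x ^ q :=
                Real.rpow_le_rpow (Real.rpow_nonneg hnn _) hval hq0.le
        rw [h1, Real.inv_rpow hSnn] at h2
        have hSq : 0 < S ^ q := Real.rpow_pos_of_pos hS q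
        calc ∑' n, (∑ j, ‖(z j) (x n)‖ ^ p) ^ (q / p)
            = S ^ q * ((S ^ q)⁻¹ * ∑' n, (∑ j, ‖(z j) (x n)‖ ^ p) ^ (q / p)) := by
              rw [← mul_assoc, mul_inv_cancel₀ hSq.ne', one_mul]
          _ ≤ S ^ q * midNorm 𝕜 q p x ^ q := mul_le_mul_of_nonneg_left h2 hSq.le
      -- Minkowski
      have hs1 : (1:ℝ) ≤ p / q := (one_le_div hq0).mpr hqp
      have h1q : 1 / (p / q) = q / p := one_div_div p q
      have has : ∀ (n : ℕ) (j : Fin k), (‖(z j) (x n)‖ ^ q) ^ (p / q) = ‖(z j) (x n)‖ ^ p :=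
        fun n j => by rw [← Real.rpow_mul (norm_nonneg _), hqp']
      have hminkS : Summable fun n =>
          (∑ j, (‖(z j) (x n)‖ ^ q) ^ (p / q)) ^ (1 / (p / q)) := by
        refine hRsum.congr fun n => ?_
        rw [(Finset.sum_congr rfl fun j _ => (has n j).symm :
          (∑ j, ‖(z j) (x n)‖ ^ p) = ∑ j, (‖(z j) (x n)‖ ^ q) ^ (p / q)), h1q]
      have hmink := minkowski_tsum hs1 (fun n j => ‖(z j) (x n)‖ ^ q)
        (fun n j => Real.rpow_nonneg (norm_nonneg _) _)
        (fun j => hsummq (z j)) hminkS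
      -- identify the lp norms
      have hbnn : ∀ j : Fin k, (0:ℝ) ≤ ∑' n, ‖(z j) (x n)‖ ^ q :=
        fun j => tsum_nonneg fun n => Real.rpow_nonneg (norm_nonneg _) _
      have hb : ∀ j : Fin k, ‖Ψ (z j)‖ ^ p = (∑' n, ‖(z j) (x n)‖ ^ q) ^ (p / q) := by
        intro j
        rw [hΨnorm (z j), ← Real.rpow_mul (hbnn j)]
        congr 1
        rw [one_div, inv_mul_eq_div]
      have hU : (∑ j, ‖Ψ (z j)‖ ^ p) = ∑ j, (∑' n, ‖(z j) (x n)‖ ^ q) ^ (p / q) :=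
        Finset.sum_congr rfl fun j _ => hb j
      have hUnn : (0:ℝ) ≤ ∑ j, ‖Ψ (z j)‖ ^ p :=
        Finset.sum_nonneg fun j _ => Real.rpow_nonneg (norm_nonneg _) _
      have h2 : (∑ j, ‖Ψ (z j)‖ ^ p) ^ (q / p) ≤ S ^ q * midNorm 𝕜 q p x ^ q := by
        rw [hU, ← h1q]
        refine hmink.trans ?_
        refine le_trans (le_of_eq (tsum_congr fun n => ?_)) hRle
        rw [(Finset.sum_congr rfl fun j _ => has n j :
          (∑ j, (‖(z j) (x n)‖ ^ q) ^ (p / q)) = ∑ j, ‖(z j) (x n)‖ ^ p), h1q]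
      have h3 : (∑ j, ‖Ψ (z j)‖ ^ p) ≤ (S * midNorm 𝕜 q p x) ^ p := by
        have hqppq : q / p * (p / q) = 1 := by field_simp
        calc (∑ j, ‖Ψ (z j)‖ ^ p)
            = ((∑ j, ‖Ψ (z j)‖ ^ p) ^ (q / p)) ^ (p / q) := by
              rw [← Real.rpow_mul hUnn, hqppq, Real.rpow_one]
          _ ≤ (S ^ q * midNorm 𝕜 q p x ^ q) ^ (p / q) :=
              Real.rpow_le_rpow (Real.rpow_nonneg hUnn _) h2 (by positivity)
          _ = ((S * midNorm 𝕜 q p x) ^ q) ^ (p / q) := by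
              rw [Real.mul_rpow hSnn hM0]
          _ = (S * midNorm 𝕜 q p x) ^ p := by
              rw [← Real.rpow_mul (mul_nonneg hSnn hM0), hqp']
      calc (∑ j, ‖Ψ (z j)‖ ^ p) ^ (1 / p)
          ≤ ((S * midNorm 𝕜 q p x) ^ p) ^ (1 / p) :=
            Real.rpow_le_rpow hUnn h3 (by positivity)
        _ = S * midNorm 𝕜 q p x := rpow_rpow_one_div (mul_nonneg hSnn hM0) hp'
        _ = midNorm 𝕜 q p x * S := mul_comm _ _
  refine ⟨Ψ, hΨ, ⟨midNorm 𝕜 q p x + 1, by linarith, fun k z => ?_⟩, ?_⟩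
  · exact (key k z).trans (mul_le_mul_of_nonneg_right (by linarith) (hS0g k z))
  · by_contra hcon
    push_neg at hcon
    have hε : 0 < (piNorm 𝕜 p Ψ - midNorm 𝕜 q p x) / 2 := by linarith
    have h1 : piNorm 𝕜 p Ψ ≤ midNorm 𝕜 q p x + (piNorm 𝕜 p Ψ - midNorm 𝕜 q p x) / 2 := by
      refine csInf_le ⟨0, fun C hC => hC.1.le⟩ ⟨by linarith, fun k z => ?_⟩
      exact (key k z).trans (mul_le_mul_of_nonneg_right (by linarith) (hS0g k z))
    linarith
end
end

section
/- Let E be a Banach space and 1 ≤ p ≤ q < ∞. Let x = (x_j)_{j=1}^∞ be a weakly q-summable sequence in E such that the operator Ψ_x : E* → ℓ_q, Ψ_x(x*) = (x*(x_j))_{j=1}^∞, is absolutely p-summing. Then (x_j)_{j=1}^∞ is mid (q,p)-summable and ‖(x_j)‖_{q,p} ≤ π_p(Ψ_x). -/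
open NormedSpace MeasureTheory

noncomputable section

/-- Finite Minkowski (mixed-norm) inequality via the triangle inequality in `PiLp`. -/
theorem aux_minkowski_finset {r : ℝ} (hr : 1 ≤ r) (s t : Finset ℕ) (a : ℕ → ℕ → ℝ)
    (ha : ∀ n j, 0 ≤ a n j) :
    (∑ j ∈ s, (∑ n ∈ t, a n j) ^ r) ^ (1 / r) ≤ ∑ n ∈ t, (∑ j ∈ s, a n j ^ r) ^ (1 / r) := by
  haveI : Fact (1 ≤ ENNReal.ofReal r) := ⟨ENNReal.one_le_ofReal.2 hr⟩
  have hr0 : 0 < r := lt_of_lt_of_le one_pos hr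
  have hrtoReal : (ENNReal.ofReal r).toReal = r := ENNReal.toReal_ofReal hr0.le
  set rr := ENNReal.ofReal r with hrr
  let v : ℕ → PiLp rr (fun _ : s => ℝ) := fun n =>
    (WithLp.linearEquiv rr ℝ (∀ _ : s, ℝ)).symm (fun j => a n (j : ℕ))
  have happ : ∀ n (j : s), v n j = a n (j : ℕ) := fun n j => rfl
  have hnorm : ∀ n, ‖v n‖ = (∑ j ∈ s, a n j ^ r) ^ (1 / r) := by
    intro n
    rw [PiLp.norm_eq_sum (by rw [hrtoReal]; exact hr0) (v n), hrtoReal]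
    congr 1
    rw [← Finset.sum_coe_sort s (fun j => a n j ^ r)]
    exact Finset.sum_congr rfl fun j _ => by rw [happ n j, Real.norm_of_nonneg (ha n j)]
  have hsum_app : ∀ j : s, (∑ n ∈ t, v n) j = ∑ n ∈ t, a n (j : ℕ) := by
    intro j
    have := map_sum (WithLp.linearEquiv rr ℝ (∀ _ : s, ℝ)) v t
    calc (∑ n ∈ t, v n) j = (WithLp.linearEquiv rr ℝ (∀ _ : s, ℝ)) (∑ n ∈ t, v n) j := rfl
      _ = (∑ n ∈ t, (WithLp.linearEquiv rr ℝ (∀ _ : s, ℝ)) (v n)) j := by rw [this]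
      _ = ∑ n ∈ t, a n (j : ℕ) := by rw [Finset.sum_apply]; rfl
  have key : ‖∑ n ∈ t, v n‖ ≤ ∑ n ∈ t, ‖v n‖ := norm_sum_le t v
  have hL : ‖∑ n ∈ t, v n‖ = (∑ j ∈ s, (∑ n ∈ t, a n j) ^ r) ^ (1 / r) := by
    rw [PiLp.norm_eq_sum (by rw [hrtoReal]; exact hr0), hrtoReal]
    congr 1
    rw [← Finset.sum_coe_sort s (fun j => (∑ n ∈ t, a n j) ^ r)]
    refine Finset.sum_congr rfl fun j _ => ?_
    rw [hsum_app j, Real.norm_of_nonneg (Finset.sum_nonneg fun n _ => ha n j)]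
  calc (∑ j ∈ s, (∑ n ∈ t, a n j) ^ r) ^ (1 / r) = ‖∑ n ∈ t, v n‖ := hL.symm
    _ ≤ ∑ n ∈ t, ‖v n‖ := key
    _ = ∑ n ∈ t, (∑ j ∈ s, a n j ^ r) ^ (1 / r) := Finset.sum_congr rfl fun n _ => hnorm n

/-- Countable Minkowski (mixed-norm) inequality. -/
theorem aux_minkowski_tsum {r : ℝ} (hr : 1 ≤ r) (a : ℕ → ℕ → ℝ) (ha : ∀ n j, 0 ≤ a n j)
    (h1 : ∀ j, Summable fun n => a n j) (B : ℕ → ℝ) (hB0 : ∀ n, 0 ≤ B n)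
    (hB : ∀ n, ∀ s : Finset ℕ, (∑ j ∈ s, a n j ^ r) ^ (1 / r) ≤ B n) (hBs : Summable B) :
    Summable (fun j => (∑' n, a n j) ^ r) ∧
      ∑' j, (∑' n, a n j) ^ r ≤ (∑' n, B n) ^ r := by
  have hr0 : 0 < r := lt_of_lt_of_le one_pos hr
  set T := ∑' n, B n with hT
  have hT0 : 0 ≤ T := tsum_nonneg hB0
  have main : ∀ s : Finset ℕ, ∑ j ∈ s, (∑' n, a n j) ^ r ≤ T ^ r := by
    intro s
    have key : ∀ t : Finset ℕ, ∑ j ∈ s, (∑ n ∈ t, a n j) ^ r ≤ T ^ r := by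
      intro t
      have h2 : (∑ j ∈ s, (∑ n ∈ t, a n j) ^ r) ^ (1 / r) ≤ T :=
        le_trans (aux_minkowski_finset hr s t a ha)
          (le_trans (Finset.sum_le_sum fun n _ => hB n s) (Summable.sum_le_tsum t (fun n _ => hB0 n) hBs))
      have h3 := Real.rpow_le_rpow (Real.rpow_nonneg
        (Finset.sum_nonneg fun j _ => Real.rpow_nonneg
          (Finset.sum_nonneg fun n _ => ha n j) _) _) h2 hr0.le
      rwa [one_div, Real.rpow_inv_rpow (Finset.sum_nonneg fun j _ => Real.rpow_nonneg
        (Finset.sum_nonneg fun n _ => ha n j) _) hr0.ne'] at h3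
    have hlim : Filter.Tendsto (fun t : Finset ℕ => ∑ j ∈ s, (∑ n ∈ t, a n j) ^ r)
        Filter.atTop (nhds (∑ j ∈ s, (∑' n, a n j) ^ r)) := by
      refine tendsto_finset_sum s fun j _ => ?_
      exact ((Real.continuousAt_rpow_const _ r (Or.inr hr0.le)).tendsto).comp (h1 j).hasSum
    exact le_of_tendsto' hlim key
  have hsummable : Summable fun j => (∑' n, a n j) ^ r := by
    apply summable_of_sum_range_le (c := T ^ r)
      (fun j => Real.rpow_nonneg (tsum_nonneg fun n => ha n j) _)
    intro k
    exact main (Finset.range k)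
  exact ⟨hsummable, Summable.tsum_le_of_sum_le hsummable main⟩

/-- Uniform boundedness: for a weakly `p`-summable sequence in `E`, the weak `ℓ_p` sums over
the unit ball of the dual are uniformly bounded (Banach–Steinhaus). -/
theorem aux_weak_bdd {𝕜 E : Type*} [RCLike 𝕜] [NormedAddCommGroup E] [NormedSpace 𝕜 E]
    (p : ℝ) (hp : 1 ≤ p) (xs : ℕ → E) (hxs : WeaklySummable 𝕜 p xs) :
    ∃ D : ℝ, 0 ≤ D ∧ ∀ φ : StrongDual 𝕜 E, ‖φ‖ ≤ 1 →
      (∑' n, ‖φ (xs n)‖ ^ p) ^ (1 / p) ≤ D := by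
  haveI : Fact (1 ≤ ENNReal.ofReal p) := ⟨ENNReal.one_le_ofReal.2 hp⟩
  have hp0 : 0 < p := lt_of_lt_of_le one_pos hp
  have hptoReal : (ENNReal.ofReal p).toReal = p := ENNReal.toReal_ofReal hp0.le
  set pp := ENNReal.ofReal p with hpp
  let g : Finset ℕ → (StrongDual 𝕜 E →L[𝕜] lp (fun _ : ℕ => 𝕜) pp) := fun s =>
    ∑ n ∈ s, (ContinuousLinearMap.apply 𝕜 𝕜 (xs n)).smulRight (lp.single pp n (1 : 𝕜))
  have hg : ∀ s φ (j : ℕ), (g s φ : ∀ _ : ℕ, 𝕜) j = if j ∈ s then φ (xs j) else 0 := by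
    intro s φ j
    simp only [g, ContinuousLinearMap.sum_apply, lp.coeFn_sum, Finset.sum_apply,
      ContinuousLinearMap.smulRight_apply, lp.coeFn_smul, Pi.smul_apply,
      ContinuousLinearMap.apply_apply, lp.single_apply, Pi.single_apply, smul_eq_mul, eq_rec_constant,
      dite_eq_ite, mul_ite, mul_one, mul_zero, Finset.sum_ite_eq]
  have hnorm : ∀ s φ, ‖g s φ‖ = (∑ n ∈ s, ‖φ (xs n)‖ ^ p) ^ (1 / p) := by
    intro s φ
    rw [lp.norm_eq_tsum_rpow (by rw [hptoReal]; exact hp0) (g s φ)]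
    rw [hptoReal]
    congr 1
    rw [tsum_eq_sum (s := s) (fun j hj => by
      rw [hg s φ j, if_neg hj, norm_zero, Real.zero_rpow hp0.ne'])]
    exact Finset.sum_congr rfl fun j hj => by rw [hg s φ j, if_pos hj]
  obtain ⟨C', hC'⟩ := banach_steinhaus (g := g) (fun φ => ⟨(∑' n, ‖φ (xs n)‖ ^ p) ^ (1 / p),
    fun s => by
      rw [hnorm s φ]
      exact Real.rpow_le_rpow (Finset.sum_nonneg fun n _ => Real.rpow_nonneg (norm_nonneg _) _)
        (Summable.sum_le_tsum s (fun n _ => Real.rpow_nonneg (norm_nonneg _) _) (hxs φ))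
        (by positivity)⟩)
  refine ⟨max C' 0, le_max_right _ _, fun φ hφ => ?_⟩
  have hDsum : ∀ s : Finset ℕ, ∑ n ∈ s, ‖φ (xs n)‖ ^ p ≤ (max C' 0) ^ p := by
    intro s
    have h1 : ‖g s φ‖ ≤ max C' 0 := by
      calc ‖g s φ‖ ≤ ‖g s‖ * ‖φ‖ := (g s).le_opNorm φ
        _ ≤ max C' 0 * 1 := mul_le_mul (le_trans (hC' s) (le_max_left _ _)) hφ
            (norm_nonneg _) (le_max_right _ _)
        _ = max C' 0 := mul_one _
    rw [hnorm s φ] at h1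
    have := Real.rpow_le_rpow (Real.rpow_nonneg
      (Finset.sum_nonneg fun n _ => Real.rpow_nonneg (norm_nonneg _) _) _) h1 hp0.le
    rwa [one_div, Real.rpow_inv_rpow
      (Finset.sum_nonneg fun n _ => Real.rpow_nonneg (norm_nonneg _) _) hp0.ne'] at this
  have htsum : (∑' n, ‖φ (xs n)‖ ^ p) ≤ (max C' 0) ^ p :=
    Summable.tsum_le_of_sum_le (hxs φ) hDsum
  calc (∑' n, ‖φ (xs n)‖ ^ p) ^ (1 / p) ≤ ((max C' 0) ^ p) ^ (1 / p) :=
        Real.rpow_le_rpow (tsum_nonneg fun n => Real.rpow_nonneg (norm_nonneg _) _) htsum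
          (by positivity)
    _ = max C' 0 := by
        rw [one_div, Real.rpow_rpow_inv (le_max_right _ _) hp0.ne']

/-- The key estimate: for any weakly `p`-summable `(xs_n)` in `E*` and any admissible
`p`-summing constant `C` for `Ψ`, the mid sum is summable and bounded by
`(C * weakNorm xs) ^ q`. -/
theorem aux_key {𝕜 E : Type*} [RCLike 𝕜] [NormedAddCommGroup E] [NormedSpace 𝕜 E]
    (p q : ℝ) (hp : 1 ≤ p) (hpq : p ≤ q) [Fact (1 ≤ ENNReal.ofReal q)]
    (x : ℕ → E)
    (Ψ : StrongDual 𝕜 E →L[𝕜] lp (fun _ : ℕ => 𝕜) (ENNReal.ofReal q))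
    (hΨ : ∀ (φ : StrongDual 𝕜 E) (j : ℕ), (Ψ φ : ∀ _ : ℕ, 𝕜) j = φ (x j))
    (xs : ℕ → StrongDual 𝕜 E) (hxs : WeaklySummable 𝕜 p xs)
    (C : ℝ) (hCpos : 0 < C)
    (hC : ∀ (k : ℕ) (z : Fin k → StrongDual 𝕜 E),
      (∑ j, ‖Ψ (z j)‖ ^ p) ^ (1 / p) ≤
        C * ⨆ φ : {φ : StrongDual 𝕜 (StrongDual 𝕜 E) // ‖φ‖ ≤ 1}, (∑ j, ‖φ.1 (z j)‖ ^ p) ^ (1 / p)) :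
    Summable (fun j => (∑' n, ‖xs n (x j)‖ ^ p) ^ (q / p)) ∧
      ∑' j, (∑' n, ‖xs n (x j)‖ ^ p) ^ (q / p) ≤ (C * weakNorm 𝕜 p xs) ^ q := by
  have hp0 : 0 < p := lt_of_lt_of_le one_pos hp
  have hq0 : 0 < q := lt_of_lt_of_le hp0 hpq
  have hq1 : 1 ≤ q := le_trans hp hpq
  have hr : 1 ≤ q / p := (one_le_div hp0).2 hpq
  have hr0 : 0 < q / p := lt_of_lt_of_le one_pos hr
  have hqtoReal : (ENNReal.ofReal q).toReal = q := ENNReal.toReal_ofReal hq0.le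
  obtain ⟨D, hD0, hD⟩ := aux_weak_bdd p hp xs hxs
  set M := weakNorm 𝕜 p xs with hM
  have hM0 : 0 ≤ M := Real.iSup_nonneg fun φ => Real.rpow_nonneg
    (tsum_nonneg fun n => Real.rpow_nonneg (norm_nonneg _) _) _
  have hbdd : BddAbove (Set.range fun φ : {φ : StrongDual 𝕜 (StrongDual 𝕜 E) // ‖φ‖ ≤ 1} =>
      (∑' n, ‖φ.1 (xs n)‖ ^ p) ^ (1 / p)) := by
    refine ⟨D, ?_⟩
    rintro _ ⟨φ, rfl⟩
    exact hD φ.1 φ.2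
  haveI : Nonempty {φ : StrongDual 𝕜 (StrongDual 𝕜 E) // ‖φ‖ ≤ 1} := ⟨⟨0, by exact (norm_zero (E := StrongDual 𝕜 (StrongDual 𝕜 E))).trans_le zero_le_one⟩⟩
  have hpartial : ∀ k : ℕ, ∑ n ∈ Finset.range k, ‖Ψ (xs n)‖ ^ p ≤ (C * M) ^ p := by
    intro k
    have h1 : (∑ j : Fin k, ‖Ψ (xs j)‖ ^ p) ^ (1 / p) ≤ C *
        ⨆ φ : {φ : StrongDual 𝕜 (StrongDual 𝕜 E) // ‖φ‖ ≤ 1}, (∑ j : Fin k, ‖φ.1 (xs j)‖ ^ p) ^ (1 / p) :=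
      hC k (fun j => xs j)
    have h2 : (⨆ φ : {φ : StrongDual 𝕜 (StrongDual 𝕜 E) // ‖φ‖ ≤ 1},
        (∑ j : Fin k, ‖φ.1 (xs j)‖ ^ p) ^ (1 / p)) ≤ M := by
      refine ciSup_le fun φ => ?_
      have hfin : (∑ j : Fin k, ‖φ.1 (xs j)‖ ^ p) ≤ ∑' n, ‖φ.1 (xs n)‖ ^ p := by
        rw [Fin.sum_univ_eq_sum_range (fun j => ‖φ.1 (xs j)‖ ^ p) k]
        exact Summable.sum_le_tsum _ (fun n _ => Real.rpow_nonneg (norm_nonneg _) _) (hxs φ.1)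
      refine le_trans (Real.rpow_le_rpow (Finset.sum_nonneg fun j _ =>
        Real.rpow_nonneg (norm_nonneg _) _) hfin (by positivity)) ?_
      exact le_ciSup hbdd φ
    have h3 : (∑ j : Fin k, ‖Ψ (xs j)‖ ^ p) ^ (1 / p) ≤ C * M :=
      le_trans h1 (mul_le_mul_of_nonneg_left h2 hCpos.le)
    have h4 := Real.rpow_le_rpow (Real.rpow_nonneg (Finset.sum_nonneg fun j _ =>
      Real.rpow_nonneg (norm_nonneg _) _) _) h3 hp0.le
    rw [one_div, Real.rpow_inv_rpow (Finset.sum_nonneg fun j _ =>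
      Real.rpow_nonneg (norm_nonneg _) _) hp0.ne'] at h4
    rwa [Fin.sum_univ_eq_sum_range (fun n => ‖Ψ (xs n)‖ ^ p) k] at h4
  have hBsummable : Summable fun n => ‖Ψ (xs n)‖ ^ p :=
    summable_of_sum_range_le (fun n => Real.rpow_nonneg (norm_nonneg _) _) hpartial
  have hBtsum : ∑' n, ‖Ψ (xs n)‖ ^ p ≤ (C * M) ^ p :=
    Real.tsum_le_of_sum_range_le (fun n => Real.rpow_nonneg (norm_nonneg _) _) hpartial
  have h1 : ∀ j, Summable fun n => ‖xs n (x j)‖ ^ p := by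
    intro j
    refine (hxs (ContinuousLinearMap.apply 𝕜 𝕜 (x j))).congr fun n => ?_
    simp [ContinuousLinearMap.apply_apply]
  have hBpt : ∀ n, ∀ s : Finset ℕ,
      (∑ j ∈ s, (‖xs n (x j)‖ ^ p) ^ (q / p)) ^ (1 / (q / p)) ≤ ‖Ψ (xs n)‖ ^ p := by
    intro n s
    have hcoord : ∀ j, (‖xs n (x j)‖ ^ p) ^ (q / p) = ‖(Ψ (xs n) : ∀ _ : ℕ, 𝕜) j‖ ^ q := by
      intro j
      rw [← Real.rpow_mul (norm_nonneg _), mul_div_cancel₀ q hp0.ne', hΨ (xs n) j]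
    have hsummq : Summable fun j => ‖(Ψ (xs n) : ∀ _ : ℕ, 𝕜) j‖ ^ q := by
      have := (lp.memℓp (Ψ (xs n))).summable (by rw [hqtoReal]; exact hq0)
      rwa [hqtoReal] at this
    have hnorm : ‖Ψ (xs n)‖ ^ q = ∑' j, ‖(Ψ (xs n) : ∀ _ : ℕ, 𝕜) j‖ ^ q := by
      have := lp.norm_rpow_eq_tsum (p := ENNReal.ofReal q)
        (by rw [hqtoReal]; exact hq0) (Ψ (xs n))
      rwa [hqtoReal] at this
    have hle : (∑ j ∈ s, (‖xs n (x j)‖ ^ p) ^ (q / p)) ≤ ‖Ψ (xs n)‖ ^ q := by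
      rw [hnorm]
      refine le_trans (le_of_eq (Finset.sum_congr rfl fun j _ => hcoord j)) ?_
      exact Summable.sum_le_tsum s (fun j _ => Real.rpow_nonneg (norm_nonneg _) _) hsummq
    have := Real.rpow_le_rpow (Finset.sum_nonneg fun j _ =>
      Real.rpow_nonneg (Real.rpow_nonneg (norm_nonneg _) _) _) hle
      (by positivity : (0:ℝ) ≤ 1 / (q / p))
    refine le_trans this (le_of_eq ?_)
    rw [one_div_div, ← Real.rpow_mul (norm_nonneg _)]
    congr 1
    field_simp
  obtain ⟨hsm, hle⟩ := aux_minkowski_tsum hr (fun n j => ‖xs n (x j)‖ ^ p)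
    (fun n j => Real.rpow_nonneg (norm_nonneg _) _) h1 (fun n => ‖Ψ (xs n)‖ ^ p)
    (fun n => Real.rpow_nonneg (norm_nonneg _) _) hBpt hBsummable
  refine ⟨hsm, le_trans hle ?_⟩
  calc (∑' n, ‖Ψ (xs n)‖ ^ p) ^ (q / p) ≤ ((C * M) ^ p) ^ (q / p) :=
        Real.rpow_le_rpow (tsum_nonneg fun n => Real.rpow_nonneg (norm_nonneg _) _)
          hBtsum hr0.le
    _ = (C * M) ^ q := by
        rw [← Real.rpow_mul (by positivity), mul_div_cancel₀ q hp0.ne']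

variable {𝕜 E F : Type*}

/-- if `1 ≤ p ≤ q`, `x` is weakly `q`-summable and
`Ψ_x : E* → ℓ_q`, `Ψ_x(x^*) = (x^*(x_j))_j`, is absolutely `p`-summing, then `x` is
mid `(q,p)`-summable with `‖(x_j)‖_{q,p} ≤ π_p(Ψ_x)`. -/
theorem stmt7 [RCLike 𝕜] [NormedAddCommGroup E] [NormedSpace 𝕜 E] [CompleteSpace E]
    (p q : ℝ) (hp : 1 ≤ p) (hpq : p ≤ q) [Fact (1 ≤ ENNReal.ofReal q)]
    (x : ℕ → E) (hx : WeaklySummable 𝕜 q x)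
    (Ψ : StrongDual 𝕜 E →L[𝕜] lp (fun _ : ℕ => 𝕜) (ENNReal.ofReal q))
    (hΨ : ∀ (φ : StrongDual 𝕜 E) (j : ℕ), (Ψ φ : ∀ _ : ℕ, 𝕜) j = φ (x j))
    (hsum : AbsolutelySumming 𝕜 p Ψ) :
    MidSummable 𝕜 q p x ∧ midNorm 𝕜 q p x ≤ piNorm 𝕜 p Ψ := by
  have hp0 : 0 < p := lt_of_lt_of_le one_pos hp
  have hq0 : 0 < q := lt_of_lt_of_le hp0 hpq
  obtain ⟨C0, hC00, hC0⟩ := hsum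
  have hSne : {C : ℝ | 0 < C ∧ ∀ (k : ℕ) (z : Fin k → StrongDual 𝕜 E),
      (∑ j, ‖Ψ (z j)‖ ^ p) ^ (1 / p) ≤
        C * ⨆ φ : {φ : StrongDual 𝕜 (StrongDual 𝕜 E) // ‖φ‖ ≤ 1},
          (∑ j, ‖φ.1 (z j)‖ ^ p) ^ (1 / p)}.Nonempty := ⟨C0, hC00, hC0⟩
  constructor
  · intro xs hxs
    exact (aux_key p q hp hpq x Ψ hΨ xs hxs C0 hC00 hC0).1
  · unfold midNorm piNorm
    refine Real.iSup_le (fun xsa => ?_) (le_csInf hSne fun C hC => hC.1.le)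
    obtain ⟨xs, hxs, hxsnorm⟩ := xsa
    refine le_csInf hSne ?_
    rintro C ⟨hCpos, hC⟩
    have h := (aux_key p q hp hpq x Ψ hΨ xs hxs C hCpos hC).2
    have hM0 : 0 ≤ weakNorm 𝕜 p xs := Real.iSup_nonneg fun φ => Real.rpow_nonneg
      (tsum_nonneg fun n => Real.rpow_nonneg (norm_nonneg _) _) _
    have h2 : (C * weakNorm 𝕜 p xs) ^ q ≤ C ^ q := by
      refine Real.rpow_le_rpow (by positivity) ?_ hq0.le
      calc C * weakNorm 𝕜 p xs ≤ C * 1 := mul_le_mul_of_nonneg_left hxsnorm hCpos.le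
        _ = C := mul_one C
    calc (∑' j, (∑' n, ‖xs n (x j)‖ ^ p) ^ (q / p)) ^ (1 / q)
        ≤ (C ^ q) ^ (1 / q) := by
          refine Real.rpow_le_rpow (tsum_nonneg fun j => Real.rpow_nonneg
            (tsum_nonneg fun n => Real.rpow_nonneg (norm_nonneg _) _) _)
            (le_trans h h2) (by positivity)
      _ = C := by rw [one_div, Real.rpow_rpow_inv hCpos.le hq0.ne']
end
end
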